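/- arXiv:2107.07176 — 12 statements merged into one kernel-verified Lean document; each statement's English description precedes it below -/
import Mathlib

section
/- In the Tikhonov-Mann setting, for every n ∈ ℕ: d(y_{n+1},y_n) ≤ β_{n+1}·d(x_{n+1},x_n) + 2M·|β_{n+1}−β_n|. -/
/-- A `W`-hyperbolic space: a metric space together with a convexity mapping
`W x y l` (written `(1-l)x + l y` in the paper) satisfying (W1)-(W4). -/
structure WHyp (X : Type*) [MetricSpace X] where
  W : X → X → ℝ → X
  W1 : ∀ x y z : X, ∀ l ∈ Set.Icc (0:ℝ) 1,
    dist z (W x y l) ≤ (1 - l) * dist z x + l * dist z y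
  W2 : ∀ x y : X, ∀ l ∈ Set.Icc (0:ℝ) 1, ∀ l' ∈ Set.Icc (0:ℝ) 1,
    dist (W x y l) (W x y l') = |l - l'| * dist x y
  W3 : ∀ x y : X, ∀ l ∈ Set.Icc (0:ℝ) 1, W x y l = W y x (1 - l)
  W4 : ∀ x y z w : X, ∀ l ∈ Set.Icc (0:ℝ) 1,
    dist (W x z l) (W y w l) ≤ (1 - l) * dist x y + l * dist z w

theorem tm_dist_yn_consecutive
    {X : Type*} [MetricSpace X] (H : WHyp X) (C : Set X)
    (hCconv : ∀ x ∈ C, ∀ y ∈ C, ∀ l ∈ Set.Icc (0:ℝ) 1, H.W x y l ∈ C)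
    (T : X → X) (hTmaps : ∀ x ∈ C, T x ∈ C)
    (hTne : ∀ x ∈ C, ∀ y ∈ C, dist (T x) (T y) ≤ dist x y)
    (p : X) (hpC : p ∈ C) (hpfix : T p = p)
    (u : X) (huC : u ∈ C)
    (lam beta : ℕ → ℝ)
    (hlam : ∀ n, lam n ∈ Set.Icc (0:ℝ) 1) (hbeta : ∀ n, beta n ∈ Set.Icc (0:ℝ) 1)
    (x y : ℕ → X) (hx0 : x 0 ∈ C)
    (hy : ∀ n, y n = H.W u (x n) (beta n))
    (hx : ∀ n, x (n + 1) = H.W (y n) (T (y n)) (lam n))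
    (M : ℝ) (hM : M = max (dist (x 0) p) (dist u p)) :
    ∀ n : ℕ, dist (y (n + 1)) (y n) ≤
      beta (n + 1) * dist (x (n + 1)) (x n) + 2 * M * |beta (n + 1) - beta n| := by
  -- membership
  have hxC : ∀ n, x n ∈ C := by
    intro n
    induction n with
    | zero => exact hx0
    | succ k ih =>
      have hyk : y k ∈ C := by
        rw [hy k]; exact hCconv u huC (x k) ih (beta k) (hbeta k)
      rw [hx k]
      exact hCconv (y k) hyk (T (y k)) (hTmaps _ hyk) (lam k) (hlam k)
  have hyC : ∀ n, y n ∈ C := by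
    intro n; rw [hy n]; exact hCconv u huC (x n) (hxC n) (beta n) (hbeta n)
  have hMu : dist u p ≤ M := hM ▸ le_max_right _ _
  -- bound on d(x n, p)
  have hxp : ∀ n, dist (x n) p ≤ M := by
    intro n
    induction n with
    | zero => exact hM ▸ le_max_left _ _
    | succ k ih =>
      have hb0 := (hbeta k).1
      have hb1 := (hbeta k).2
      have hyp : dist (y k) p ≤ M := by
        rw [hy k, dist_comm]
        calc dist p (H.W u (x k) (beta k))
            ≤ (1 - beta k) * dist p u + beta k * dist p (x k) :=
              H.W1 u (x k) p (beta k) (hbeta k)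
          _ ≤ (1 - beta k) * M + beta k * M := by
              gcongr
              · rw [dist_comm]; exact hMu
              · rw [dist_comm]; exact ih
          _ = M := by ring
      rw [hx k, dist_comm]
      calc dist p (H.W (y k) (T (y k)) (lam k))
          ≤ (1 - lam k) * dist p (y k) + lam k * dist p (T (y k)) :=
            H.W1 _ _ p (lam k) (hlam k)
        _ ≤ (1 - lam k) * M + lam k * M := by
            have h1 : dist p (y k) ≤ M := by rw [dist_comm]; exact hyp
            have h2 : dist p (T (y k)) ≤ M := by
              calc dist p (T (y k)) = dist (T p) (T (y k)) := by rw [hpfix]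
                _ ≤ dist p (y k) := hTne p hpC (y k) (hyC k)
                _ ≤ M := h1
            have := (hlam k).1; have := (hlam k).2
            gcongr
        _ = M := by ring
  have hux : ∀ n, dist u (x n) ≤ 2 * M := by
    intro n
    calc dist u (x n) ≤ dist u p + dist p (x n) := dist_triangle _ _ _
      _ ≤ M + M := add_le_add hMu (by rw [dist_comm]; exact hxp n)
      _ = 2 * M := by ring
  intro n
  have hb' := hbeta (n + 1)
  calc dist (y (n + 1)) (y n)
      ≤ dist (y (n + 1)) (H.W u (x n) (beta (n + 1)))
        + dist (H.W u (x n) (beta (n + 1))) (y n) := dist_triangle _ _ _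
    _ ≤ beta (n + 1) * dist (x (n + 1)) (x n) + 2 * M * |beta (n + 1) - beta n| := by
        have h1 : dist (y (n + 1)) (H.W u (x n) (beta (n + 1)))
            ≤ beta (n + 1) * dist (x (n + 1)) (x n) := by
          rw [hy (n + 1)]
          calc dist (H.W u (x (n + 1)) (beta (n + 1))) (H.W u (x n) (beta (n + 1)))
              ≤ (1 - beta (n + 1)) * dist u u + beta (n + 1) * dist (x (n + 1)) (x n) :=
                H.W4 u u (x (n + 1)) (x n) (beta (n + 1)) hb'
            _ = beta (n + 1) * dist (x (n + 1)) (x n) := by simp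
        have h2 : dist (H.W u (x n) (beta (n + 1))) (y n)
            ≤ 2 * M * |beta (n + 1) - beta n| := by
          rw [hy n, H.W2 u (x n) (beta (n + 1)) hb' (beta n) (hbeta n)]
          rw [mul_comm (2 * M)]
          exact mul_le_mul_of_nonneg_left (hux n) (abs_nonneg _)
        linarith
end

section
/- In the Tikhonov-Mann setting, for every n ∈ ℕ: d(x_{n+2},x_{n+1}) ≤ β_{n+1}·d(x_{n+1},x_n) + 2M·(|β_{n+1}−β_n| + |λ_{n+1}−λ_n|). -/
theorem tm_dist_xn_consecutive
    {X : Type*} [MetricSpace X] (H : WHyp X) (C : Set X)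
    (hCconv : ∀ x ∈ C, ∀ y ∈ C, ∀ l ∈ Set.Icc (0:ℝ) 1, H.W x y l ∈ C)
    (T : X → X) (hTmaps : ∀ x ∈ C, T x ∈ C)
    (hTne : ∀ x ∈ C, ∀ y ∈ C, dist (T x) (T y) ≤ dist x y)
    (p : X) (hpC : p ∈ C) (hpfix : T p = p)
    (u : X) (huC : u ∈ C)
    (lam beta : ℕ → ℝ)
    (hlam : ∀ n, lam n ∈ Set.Icc (0:ℝ) 1) (hbeta : ∀ n, beta n ∈ Set.Icc (0:ℝ) 1)
    (x y : ℕ → X) (hx0 : x 0 ∈ C)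
    (hy : ∀ n, y n = H.W u (x n) (beta n))
    (hx : ∀ n, x (n + 1) = H.W (y n) (T (y n)) (lam n))
    (M : ℝ) (hM : M = max (dist (x 0) p) (dist u p)) :
    ∀ n : ℕ, dist (x (n + 2)) (x (n + 1)) ≤
      beta (n + 1) * dist (x (n + 1)) (x n) +
        2 * M * (|beta (n + 1) - beta n| + |lam (n + 1) - lam n|) := by
  have hup : dist u p ≤ M := hM ▸ le_max_right _ _
  have hM0 : (0:ℝ) ≤ M := le_trans dist_nonneg (hM ▸ le_max_left _ _)
  have hxC : ∀ n, x n ∈ C := by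
    intro n
    induction n with
    | zero => exact hx0
    | succ k ih =>
      have hyk : y k ∈ C := (hy k) ▸ hCconv u huC (x k) ih (beta k) (hbeta k)
      rw [hx]
      exact hCconv (y k) hyk (T (y k)) (hTmaps _ hyk) (lam k) (hlam k)
  have hyC : ∀ n, y n ∈ C := fun n =>
    (hy n) ▸ hCconv u huC (x n) (hxC n) (beta n) (hbeta n)
  have hxM : ∀ n, dist (x n) p ≤ M := by
    intro n
    induction n with
    | zero => exact hM ▸ le_max_left _ _
    | succ k ih =>
      have h1 : dist (y k) p ≤ M := by
        rw [hy, dist_comm]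
        have := H.W1 u (x k) p (beta k) (hbeta k)
        have hpu : dist p u ≤ M := by rw [dist_comm]; exact hup
        have hpx : dist p (x k) ≤ M := by rw [dist_comm]; exact ih
        nlinarith [(hbeta k).1, (hbeta k).2]
      rw [hx, dist_comm]
      have h2 := H.W1 (y k) (T (y k)) p (lam k) (hlam k)
      have h3 : dist p (T (y k)) ≤ M := by
        rw [dist_comm]
        calc dist (T (y k)) p = dist (T (y k)) (T p) := by rw [hpfix]
          _ ≤ dist (y k) p := hTne _ (hyC k) p hpC
          _ ≤ M := h1
      have h4 : dist p (y k) ≤ M := by rw [dist_comm]; exact h1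
      nlinarith [(hlam k).1, (hlam k).2]
  have hyM : ∀ n, dist (y n) p ≤ M := by
    intro n
    rw [hy, dist_comm]
    have := H.W1 u (x n) p (beta n) (hbeta n)
    have hpu : dist p u ≤ M := by rw [dist_comm]; exact hup
    have hpx : dist p (x n) ≤ M := by rw [dist_comm]; exact hxM n
    nlinarith [(hbeta n).1, (hbeta n).2]
  have hux : ∀ m, dist u (x m) ≤ 2 * M := fun m => by
    calc dist u (x m) ≤ dist u p + dist p (x m) := dist_triangle _ _ _
      _ ≤ M + M := add_le_add hup (by rw [dist_comm]; exact hxM m)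
      _ = 2 * M := by ring
  intro n
  have hyT : dist (y (n + 1)) (T (y (n + 1))) ≤ 2 * M := by
    calc dist (y (n + 1)) (T (y (n + 1)))
        ≤ dist (y (n + 1)) p + dist p (T (y (n + 1))) := dist_triangle _ _ _
      _ ≤ M + M := by
          refine add_le_add (hyM _) ?_
          rw [dist_comm]
          calc dist (T (y (n + 1))) p = dist (T (y (n + 1))) (T p) := by rw [hpfix]
            _ ≤ dist (y (n + 1)) p := hTne _ (hyC _) p hpC
            _ ≤ M := hyM _
      _ = 2 * M := by ring
  -- piece 1: change lambda
  have h1 : dist (x (n + 2)) (H.W (y (n + 1)) (T (y (n + 1))) (lam n))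
      ≤ |lam (n + 1) - lam n| * (2 * M) := by
    have hx2 : x (n + 2) = H.W (y (n + 1)) (T (y (n + 1))) (lam (n + 1)) := hx (n + 1)
    rw [hx2, H.W2 _ _ _ (hlam (n + 1)) _ (hlam n)]
    exact mul_le_mul_of_nonneg_left hyT (abs_nonneg _)
  -- piece 2: change y
  have hyy : dist (y (n + 1)) (y n)
      ≤ beta (n + 1) * dist (x (n + 1)) (x n) + |beta (n + 1) - beta n| * (2 * M) := by
    have ha : dist (y (n + 1)) (H.W u (x n) (beta (n + 1)))
        ≤ beta (n + 1) * dist (x (n + 1)) (x n) := by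
      rw [hy (n + 1)]
      have := H.W4 u u (x (n + 1)) (x n) (beta (n + 1)) (hbeta (n + 1))
      simpa using this
    have hb : dist (H.W u (x n) (beta (n + 1))) (y n)
        ≤ |beta (n + 1) - beta n| * (2 * M) := by
      rw [hy n, H.W2 _ _ _ (hbeta (n + 1)) _ (hbeta n)]
      exact mul_le_mul_of_nonneg_left (hux n) (abs_nonneg _)
    calc dist (y (n + 1)) (y n)
        ≤ dist (y (n + 1)) (H.W u (x n) (beta (n + 1)))
          + dist (H.W u (x n) (beta (n + 1))) (y n) := dist_triangle _ _ _
      _ ≤ _ := add_le_add ha hb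
  have h2 : dist (H.W (y (n + 1)) (T (y (n + 1))) (lam n)) (x (n + 1))
      ≤ dist (y (n + 1)) (y n) := by
    rw [hx n]
    have h4 := H.W4 (y (n + 1)) (y n) (T (y (n + 1))) (T (y n)) (lam n) (hlam n)
    have hT : dist (T (y (n + 1))) (T (y n)) ≤ dist (y (n + 1)) (y n) :=
      hTne _ (hyC _) _ (hyC _)
    nlinarith [(hlam n).1, (hlam n).2, dist_nonneg (x := y (n + 1)) (y := y n)]
  calc dist (x (n + 2)) (x (n + 1))
      ≤ dist (x (n + 2)) (H.W (y (n + 1)) (T (y (n + 1))) (lam n))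
        + dist (H.W (y (n + 1)) (T (y (n + 1))) (lam n)) (x (n + 1)) := dist_triangle _ _ _
    _ ≤ |lam (n + 1) - lam n| * (2 * M)
        + (beta (n + 1) * dist (x (n + 1)) (x n) + |beta (n + 1) - beta n| * (2 * M)) :=
        add_le_add h1 (h2.trans hyy)
    _ = beta (n + 1) * dist (x (n + 1)) (x n)
        + 2 * M * (|beta (n + 1) - beta n| + |lam (n + 1) - lam n|) := by ring
end

section
/- In the Tikhonov-Mann setting, for every n ∈ ℕ: λ_n·d(x_n,Tx_n) ≤ d(x_n,x_{n+1}) + 2M·(1−β_n). -/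
lemma WHyp.W_zero {X : Type*} [MetricSpace X] (H : WHyp X) (x y : X) :
    H.W x y 0 = x := by
  have h := H.W1 x y x 0 (by constructor <;> norm_num)
  simp at h
  exact h.symm

theorem tm_lam_dist_xn_Txn
    {X : Type*} [MetricSpace X] (H : WHyp X) (C : Set X)
    (hCconv : ∀ x ∈ C, ∀ y ∈ C, ∀ l ∈ Set.Icc (0:ℝ) 1, H.W x y l ∈ C)
    (T : X → X) (hTmaps : ∀ x ∈ C, T x ∈ C)
    (hTne : ∀ x ∈ C, ∀ y ∈ C, dist (T x) (T y) ≤ dist x y)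
    (p : X) (hpC : p ∈ C) (hpfix : T p = p)
    (u : X) (huC : u ∈ C)
    (lam beta : ℕ → ℝ)
    (hlam : ∀ n, lam n ∈ Set.Icc (0:ℝ) 1) (hbeta : ∀ n, beta n ∈ Set.Icc (0:ℝ) 1)
    (x y : ℕ → X) (hx0 : x 0 ∈ C)
    (hy : ∀ n, y n = H.W u (x n) (beta n))
    (hx : ∀ n, x (n + 1) = H.W (y n) (T (y n)) (lam n))
    (M : ℝ) (hM : M = max (dist (x 0) p) (dist u p)) :
    ∀ n : ℕ, lam n * dist (x n) (T (x n)) ≤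
      dist (x n) (x (n + 1)) + 2 * M * (1 - beta n) := by
  have hup : dist u p ≤ M := hM ▸ le_max_right _ _
  -- invariant: x n ∈ C and dist (x n) p ≤ M
  have key : ∀ n, x n ∈ C ∧ dist (x n) p ≤ M := by
    intro n
    induction n with
    | zero => exact ⟨hx0, hM ▸ le_max_left _ _⟩
    | succ n ih =>
      obtain ⟨hxC, hxM⟩ := ih
      have hyC : y n ∈ C := by rw [hy n]; exact hCconv u huC (x n) hxC _ (hbeta n)
      have hyM : dist (y n) p ≤ M := by
        rw [hy n, dist_comm]
        have h1 := H.W1 u (x n) p (beta n) (hbeta n)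
        obtain ⟨hb0, hb1⟩ := hbeta n
        have := dist_comm p u ▸ dist_comm p (x n) ▸ h1
        calc dist p (H.W u (x n) (beta n)) ≤ (1 - beta n) * dist p u + beta n * dist p (x n) := h1
          _ ≤ (1 - beta n) * M + beta n * M := by
              have e1 : dist p u ≤ M := by rw [dist_comm]; exact hup
              have e2 : dist p (x n) ≤ M := by rw [dist_comm]; exact hxM
              have := mul_le_mul_of_nonneg_left e1 (by linarith : (0:ℝ) ≤ 1 - beta n)
              have := mul_le_mul_of_nonneg_left e2 hb0
              linarith
          _ = M := by ring
      constructor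
      · rw [hx n]; exact hCconv _ hyC _ (hTmaps _ hyC) _ (hlam n)
      · rw [hx n, dist_comm]
        have h1 := H.W1 (y n) (T (y n)) p (lam n) (hlam n)
        obtain ⟨hl0, hl1⟩ := hlam n
        have hTy : dist p (T (y n)) ≤ M := by
          rw [dist_comm]
          calc dist (T (y n)) p = dist (T (y n)) (T p) := by rw [hpfix]
            _ ≤ dist (y n) p := hTne _ hyC _ hpC
            _ ≤ M := hyM
        calc dist p (H.W (y n) (T (y n)) (lam n))
            ≤ (1 - lam n) * dist p (y n) + lam n * dist p (T (y n)) := h1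
          _ ≤ (1 - lam n) * M + lam n * M := by
              have e1 : dist p (y n) ≤ M := by rw [dist_comm]; exact hyM
              have := mul_le_mul_of_nonneg_left e1 (by linarith : (0:ℝ) ≤ 1 - lam n)
              have := mul_le_mul_of_nonneg_left hTy hl0
              linarith
          _ = M := by ring
  intro n
  obtain ⟨hxC, hxM⟩ := key n
  obtain ⟨hl0, hl1⟩ := hlam n
  obtain ⟨hb0, hb1⟩ := hbeta n
  have hyC : y n ∈ C := by rw [hy n]; exact hCconv u huC (x n) hxC _ (hbeta n)
  -- dist (x n) (y n) ≤ (1-β) * dist (x n) u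
  have hxy : dist (x n) (y n) ≤ (1 - beta n) * dist (x n) u := by
    rw [hy n]
    have h1 := H.W1 u (x n) (x n) (beta n) (hbeta n)
    simpa using h1
  have hxu : dist (x n) u ≤ 2 * M := by
    calc dist (x n) u ≤ dist (x n) p + dist u p := by
          rw [dist_comm u p]; exact dist_triangle _ _ _
      _ ≤ M + M := by gcongr
      _ = 2 * M := by ring
  -- equality: dist (x n) (W (x n) (T (x n)) λ) = λ * dist (x n) (T (x n))
  have heq : dist (x n) (H.W (x n) (T (x n)) (lam n)) = lam n * dist (x n) (T (x n)) := by
    have h2 := H.W2 (x n) (T (x n)) 0 (by constructor <;> norm_num) (lam n) (hlam n)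
    rw [H.W_zero] at h2
    rw [h2, zero_sub, abs_neg, abs_of_nonneg hl0]
  -- W4 estimate
  have hW4 : dist (H.W (x n) (T (x n)) (lam n)) (x (n + 1)) ≤ dist (x n) (y n) := by
    rw [hx n]
    have h4 := H.W4 (x n) (y n) (T (x n)) (T (y n)) (lam n) (hlam n)
    have hT : dist (T (x n)) (T (y n)) ≤ dist (x n) (y n) := hTne _ hxC _ hyC
    calc dist (H.W (x n) (T (x n)) (lam n)) (H.W (y n) (T (y n)) (lam n))
        ≤ (1 - lam n) * dist (x n) (y n) + lam n * dist (T (x n)) (T (y n)) := h4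
      _ ≤ (1 - lam n) * dist (x n) (y n) + lam n * dist (x n) (y n) :=
          add_le_add le_rfl (mul_le_mul_of_nonneg_left hT hl0)
      _ = dist (x n) (y n) := by ring
  calc lam n * dist (x n) (T (x n))
      = dist (x n) (H.W (x n) (T (x n)) (lam n)) := heq.symm
    _ ≤ dist (x n) (x (n + 1)) + dist (x (n + 1)) (H.W (x n) (T (x n)) (lam n)) :=
        dist_triangle _ _ _
    _ ≤ dist (x n) (x (n + 1)) + dist (x n) (y n) := by
        rw [dist_comm (x (n+1))]; gcongr
    _ ≤ dist (x n) (x (n + 1)) + (1 - beta n) * (2 * M) := by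
        have : dist (x n) (y n) ≤ (1 - beta n) * (2 * M) :=
          hxy.trans (by gcongr)
        linarith
    _ = dist (x n) (x (n + 1)) + 2 * M * (1 - beta n) := by ring
end

section
/- (Main theorem, asymptotic regularity under (C1_q)) In the Tikhonov-Mann setting, assume: σ₁ : ℕ → ℕ is a rate of divergence for the series ∑ (1−β_n); σ₃ : ℕ → ℕ is a Cauchy modulus for the convergent series ∑ |β_{n+1}−β_n|; σ₄ : ℕ → ℕ is a Cauchy modulus for the convergent series ∑ |λ_{n+1}−λ_n|; and K ∈ ℕ satisfies K ≥ M. Define χ(k) = max{σ₃(8K(k+1)−1), σ₄(8K(k+1)−1)}. Then the function Σ(k) = σ₁(χ(3k+2) + 2 + ⌈ln(6K(k+1))⌉) + 1 is a rate of asymptotic regularity for (x_n), i.e., d(x_n,x_{n+1}) ≤ 1/(k+1) for all k ∈ ℕ and all n ≥ Σ(k). -/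
private lemma tm_aux_fin (r : ℝ) (hr : 0 < r) :
    1 / (3 * r) + 1 / (6 * r) ≤ 1 / r := by
  rw [div_add_div _ _ (by positivity) (by positivity), div_le_div_iff₀ (by positivity) hr]
  nlinarith

theorem tm_as_reg_C1q
    {X : Type*} [MetricSpace X] (H : WHyp X) (C : Set X)
    (hCconv : ∀ x ∈ C, ∀ y ∈ C, ∀ l ∈ Set.Icc (0:ℝ) 1, H.W x y l ∈ C)
    (T : X → X) (hTmaps : ∀ x ∈ C, T x ∈ C)
    (hTne : ∀ x ∈ C, ∀ y ∈ C, dist (T x) (T y) ≤ dist x y)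
    (p : X) (hpC : p ∈ C) (hpfix : T p = p)
    (u : X) (huC : u ∈ C)
    (lam beta : ℕ → ℝ)
    (hlam : ∀ n, lam n ∈ Set.Icc (0:ℝ) 1) (hbeta : ∀ n, beta n ∈ Set.Icc (0:ℝ) 1)
    (x y : ℕ → X) (hx0 : x 0 ∈ C)
    (hy : ∀ n, y n = H.W u (x n) (beta n))
    (hx : ∀ n, x (n + 1) = H.W (y n) (T (y n)) (lam n))
    (M : ℝ) (hM : M = max (dist (x 0) p) (dist u p))
    (σ₁ σ₃ σ₄ : ℕ → ℕ)
    (hσ₁ : ∀ n : ℕ, (n : ℝ) ≤ ∑ i ∈ Finset.range (σ₁ n + 1), (1 - beta i))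
    (hσ₃ : ∀ k : ℕ, ∀ n ≥ σ₃ k, ∀ q : ℕ,
      ∑ i ∈ Finset.Icc (n + 1) (n + q), |beta (i + 1) - beta i| ≤ 1 / (k + 1))
    (hσ₄ : ∀ k : ℕ, ∀ n ≥ σ₄ k, ∀ q : ℕ,
      ∑ i ∈ Finset.Icc (n + 1) (n + q), |lam (i + 1) - lam i| ≤ 1 / (k + 1))
    (K : ℕ) (hK : M ≤ (K : ℝ))
    (χ : ℕ → ℕ)
    (hχ : ∀ k : ℕ, χ k = max (σ₃ (8 * K * (k + 1) - 1)) (σ₄ (8 * K * (k + 1) - 1)))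
    (Sg : ℕ → ℕ)
    (hSg : ∀ k : ℕ,
      Sg k = σ₁ (χ (3 * k + 2) + 2 + ⌈Real.log (6 * K * (k + 1))⌉₊) + 1) :
    ∀ k : ℕ, ∀ n ≥ Sg k, dist (x n) (x (n + 1)) ≤ 1 / (k + 1) := by
  intro k n hn
  have hk1 : (0:ℝ) < (k:ℝ) + 1 := by positivity
  by_cases hK0 : K = 0
  · -- degenerate case: M = 0, so x₀ = u = p and the iteration is constant p
    have hMnn : 0 ≤ M := by
      rw [hM]; exact le_trans dist_nonneg (le_max_left _ _)
    have hM0 : M = 0 := le_antisymm (by simpa [hK0] using hK) hMnn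
    have hx0p : x 0 = p := by
      have h := le_max_left (dist (x 0) p) (dist u p)
      rw [← hM, hM0] at h
      exact dist_le_zero.mp h
    have hup : u = p := by
      have h := le_max_right (dist (x 0) p) (dist u p)
      rw [← hM, hM0] at h
      exact dist_le_zero.mp h
    have hWpp : ∀ l ∈ Set.Icc (0:ℝ) 1, H.W p p l = p := by
      intro l hl
      have h1 := H.W1 p p p l hl
      simp only [dist_self, mul_zero, add_zero, zero_add] at h1
      exact (dist_le_zero.mp (by linarith)).symm
    have hall : ∀ m, x m = p := by
      intro m
      induction m with
      | zero => exact hx0p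
      | succ m ih =>
        have hym : y m = p := by
          rw [hy m, hup, ih]; exact hWpp _ (hbeta m)
        rw [hx m, hym, hpfix]
        exact hWpp _ (hlam m)
    rw [hall n, hall (n+1)]
    simp only [dist_self]
    positivity
  · -- main case : K ≥ 1
    have hK1 : (1:ℝ) ≤ (K:ℝ) := by exact_mod_cast Nat.one_le_iff_ne_zero.mpr hK0
    have hKpos : (0:ℝ) < (K:ℝ) := by linarith
    -- boundedness
    have ystep : ∀ m, x m ∈ C → dist (x m) p ≤ M → y m ∈ C ∧ dist (y m) p ≤ M := by
      intro m hmC hmd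
      have hb := hbeta m
      constructor
      · rw [hy m]; exact hCconv u huC _ hmC _ hb
      · rw [hy m, dist_comm]
        have h1 := H.W1 u (x m) p (beta m) hb
        have hup : dist p u ≤ M := by
          rw [dist_comm, hM]; exact le_max_right _ _
        have hxp : dist p (x m) ≤ M := by rw [dist_comm]; exact hmd
        obtain ⟨hb0, hb1⟩ := hb
        nlinarith [h1, mul_le_mul_of_nonneg_left hup (by linarith : (0:ℝ) ≤ 1 - beta m),
          mul_le_mul_of_nonneg_left hxp hb0]
    have xstep : ∀ m, y m ∈ C → dist (y m) p ≤ M → x (m+1) ∈ C ∧ dist (x (m+1)) p ≤ M := by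
      intro m hmC hmd
      have hl := hlam m
      constructor
      · rw [hx m]; exact hCconv _ hmC _ (hTmaps _ hmC) _ hl
      · rw [hx m, dist_comm]
        have h1 := H.W1 (y m) (T (y m)) p (lam m) hl
        have hyp : dist p (y m) ≤ M := by rw [dist_comm]; exact hmd
        have hTyp : dist p (T (y m)) ≤ M := by
          calc dist p (T (y m)) = dist (T p) (T (y m)) := by rw [hpfix]
            _ ≤ dist p (y m) := hTne p hpC (y m) hmC
            _ ≤ M := hyp
        obtain ⟨hl0, hl1⟩ := hl
        nlinarith [h1, mul_le_mul_of_nonneg_left hyp (by linarith : (0:ℝ) ≤ 1 - lam m),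
          mul_le_mul_of_nonneg_left hTyp hl0]
    have hxC : ∀ m, x m ∈ C ∧ dist (x m) p ≤ M := by
      intro m
      induction m with
      | zero => exact ⟨hx0, by rw [hM]; exact le_max_left _ _⟩
      | succ m ih =>
        obtain ⟨hc, hd⟩ := ystep m ih.1 ih.2
        exact xstep m hc hd
    have hyC : ∀ m, y m ∈ C ∧ dist (y m) p ≤ M := fun m => ystep m (hxC m).1 (hxC m).2
    have huxm : ∀ m, dist u (x m) ≤ 2 * K := by
      intro m
      calc dist u (x m) ≤ dist u p + dist p (x m) := dist_triangle _ _ _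
        _ ≤ M + M := add_le_add (by rw [hM]; exact le_max_right _ _)
            (by rw [dist_comm]; exact (hxC m).2)
        _ ≤ 2 * K := by linarith
    have hyTy : ∀ m, dist (y m) (T (y m)) ≤ 2 * K := by
      intro m
      have h2 : dist p (T (y m)) ≤ dist (y m) p := by
        calc dist p (T (y m)) = dist (T p) (T (y m)) := by rw [hpfix]
          _ ≤ dist p (y m) := hTne p hpC (y m) (hyC m).1
          _ = dist (y m) p := dist_comm _ _
      calc dist (y m) (T (y m)) ≤ dist (y m) p + dist p (T (y m)) := dist_triangle _ _ _
        _ ≤ M + M := add_le_add (hyC m).2 (h2.trans (hyC m).2)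
        _ ≤ 2 * K := by linarith
    have had : ∀ m, dist (x m) (x (m+1)) ≤ 2 * K := by
      intro m
      calc dist (x m) (x (m+1)) ≤ dist (x m) p + dist p (x (m+1)) := dist_triangle _ _ _
        _ ≤ M + M := add_le_add (hxC m).2 (by rw [dist_comm]; exact (hxC (m+1)).2)
        _ ≤ 2 * K := by linarith
    -- the recurrence
    have hyrec : ∀ m, dist (y (m+1)) (y m) ≤
        beta (m+1) * dist (x m) (x (m+1)) + 2 * K * |beta (m+1) - beta m| := by
      intro m
      rw [hy (m+1), hy m]
      have hW4 := H.W4 u u (x (m+1)) (x m) (beta (m+1)) (hbeta (m+1))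
      have hW2 := H.W2 u (x m) (beta (m+1)) (hbeta (m+1)) (beta m) (hbeta m)
      have h1 : dist (H.W u (x (m+1)) (beta (m+1))) (H.W u (x m) (beta m)) ≤
          dist (H.W u (x (m+1)) (beta (m+1))) (H.W u (x m) (beta (m+1)))
          + dist (H.W u (x m) (beta (m+1))) (H.W u (x m) (beta m)) := dist_triangle _ _ _
      have hd : dist (x (m+1)) (x m) = dist (x m) (x (m+1)) := dist_comm _ _
      have h3 := mul_le_mul_of_nonneg_left (huxm m) (abs_nonneg (beta (m+1) - beta m))
      rw [dist_self, hd] at hW4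
      linarith [hW4, hW2, h1, h3]
    have hrec : ∀ m, dist (x (m+1)) (x (m+2)) ≤
        beta (m+1) * dist (x m) (x (m+1))
        + 2 * K * (|beta (m+1) - beta m| + |lam (m+1) - lam m|) := by
      intro m
      have hW4 := H.W4 (y (m+1)) (y m) (T (y (m+1))) (T (y m)) (lam (m+1)) (hlam (m+1))
      have hW2 := H.W2 (y m) (T (y m)) (lam (m+1)) (hlam (m+1)) (lam m) (hlam m)
      have h1 : dist (H.W (y (m+1)) (T (y (m+1))) (lam (m+1))) (H.W (y m) (T (y m)) (lam m)) ≤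
          dist (H.W (y (m+1)) (T (y (m+1))) (lam (m+1))) (H.W (y m) (T (y m)) (lam (m+1)))
          + dist (H.W (y m) (T (y m)) (lam (m+1))) (H.W (y m) (T (y m)) (lam m)) :=
        dist_triangle _ _ _
      have hT : dist (T (y (m+1))) (T (y m)) ≤ dist (y (m+1)) (y m) :=
        hTne _ (hyC (m+1)).1 _ (hyC m).1
      have h2 := hyrec m
      have h3 := mul_le_mul_of_nonneg_left (hyTy m) (abs_nonneg (lam (m+1) - lam m))
      have hl := hlam (m+1)
      have h4 := mul_le_mul_of_nonneg_left hT hl.1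
      have key : dist (H.W (y (m+1)) (T (y (m+1))) (lam (m+1))) (H.W (y m) (T (y m)) (lam m)) ≤
          beta (m+1) * dist (x m) (x (m+1))
          + 2 * K * (|beta (m+1) - beta m| + |lam (m+1) - lam m|) := by
        linarith [hW4, hW2, h1, h2, h3, h4]
      calc dist (x (m+1)) (x (m+2))
          = dist (H.W (y m) (T (y m)) (lam m)) (H.W (y (m+1)) (T (y (m+1))) (lam (m+1))) := by
            rw [hx m, show x (m+2) = H.W (y (m+1)) (T (y (m+1))) (lam (m+1)) from hx (m+1)]
        _ = dist (H.W (y (m+1)) (T (y (m+1))) (lam (m+1))) (H.W (y m) (T (y m)) (lam m)) :=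
            dist_comm _ _
        _ ≤ _ := key
    -- unfolding the recurrence
    set N := χ (3 * k + 2) with hN
    have unfold : ∀ m, N + 1 ≤ m → dist (x m) (x (m+1)) ≤
        (∏ j ∈ Finset.Icc (N+2) m, beta j) * dist (x (N+1)) (x (N+2))
        + ∑ i ∈ Finset.Ico (N+1) m,
            2 * K * (|beta (i + 1) - beta i| + |lam (i + 1) - lam i|) := by
      intro m hm
      induction m, hm using Nat.le_induction with
      | base =>
        have e : N + 1 + 1 = N + 2 := rfl
        simp [Finset.Icc_eq_empty (by omega : ¬ N + 2 ≤ N + 1), e]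
      | succ m hm ih =>
        have h := hrec m
        rw [Finset.prod_Icc_succ_top (by omega), Finset.sum_Ico_succ_top (by omega)]
        have hb := hbeta (m+1)
        have hsumnn : (0:ℝ) ≤ ∑ i ∈ Finset.Ico (N+1) m,
            2 * K * (|beta (i + 1) - beta i| + |lam (i + 1) - lam i|) :=
          Finset.sum_nonneg fun i _ => by positivity
        calc dist (x (m+1)) (x (m+1+1)) ≤
            beta (m+1) * dist (x m) (x (m+1))
              + 2 * K * (|beta (m+1) - beta m| + |lam (m+1) - lam m|) := h
          _ ≤ beta (m+1) * ((∏ j ∈ Finset.Icc (N+2) m, beta j) * dist (x (N+1)) (x (N+2))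
              + ∑ i ∈ Finset.Ico (N+1) m,
                  2 * K * (|beta (i + 1) - beta i| + |lam (i + 1) - lam i|))
              + 2 * K * (|beta (m+1) - beta m| + |lam (m+1) - lam m|) :=
            add_le_add_left (mul_le_mul_of_nonneg_left ih hb.1) _
          _ = (∏ j ∈ Finset.Icc (N+2) m, beta j) * beta (m+1) * dist (x (N+1)) (x (N+2))
              + (beta (m+1) * ∑ i ∈ Finset.Ico (N+1) m,
                  2 * K * (|beta (i + 1) - beta i| + |lam (i + 1) - lam i|)
                + 2 * K * (|beta (m+1) - beta m| + |lam (m+1) - lam m|)) := by ring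
          _ ≤ _ := by
            have := mul_le_of_le_one_left hsumnn hb.2
            linarith
    -- parameters
    set D := ⌈Real.log (6 * K * (k + 1))⌉₊ with hD
    set nσ := N + 2 + D with hnσ
    have hn1 : σ₁ nσ + 1 ≤ n := by
      rw [hSg k] at hn; exact hn
    -- σ₁ nσ ≥ nσ - 1
    have hub : ∀ s t : ℕ, ∑ i ∈ Finset.Ico s t, (1 - beta i) ≤ ((t - s : ℕ) : ℝ) := by
      intro s t
      calc ∑ i ∈ Finset.Ico s t, (1 - beta i) ≤ ∑ i ∈ Finset.Ico s t, (1:ℝ) :=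
            Finset.sum_le_sum fun i _ => by linarith [(hbeta i).1]
        _ = ((t - s : ℕ) : ℝ) := by simp [Nat.card_Ico]
    have hσge : nσ ≤ σ₁ nσ + 1 := by
      have h1 := hσ₁ nσ
      rw [Finset.range_eq_Ico] at h1
      have h2 := hub 0 (σ₁ nσ + 1)
      have : (nσ:ℝ) ≤ ((σ₁ nσ + 1 - 0 : ℕ) : ℝ) := le_trans h1 h2
      exact_mod_cast this
    have hnN2 : N + 2 ≤ n := by omega
    -- lower bound on the sum of 1 - beta over Icc (N+2) n
    have hsplit : ∑ i ∈ Finset.Ico 0 (N+2), (1 - beta i)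
        + ∑ i ∈ Finset.Ico (N+2) (σ₁ nσ + 1), (1 - beta i)
        = ∑ i ∈ Finset.Ico 0 (σ₁ nσ + 1), (1 - beta i) :=
      Finset.sum_Ico_consecutive _ (by omega) (by omega)
    have hlow : (D:ℝ) ≤ ∑ i ∈ Finset.Ico (N+2) (σ₁ nσ + 1), (1 - beta i) := by
      have h1 := hσ₁ nσ
      rw [Finset.range_eq_Ico] at h1
      have h2 := hub 0 (N+2)
      have h3 : ((N + 2 - 0 : ℕ) : ℝ) = ((N:ℝ) + 2) := by push_cast; ring
      have h4 : (nσ:ℝ) = (N:ℝ) + 2 + (D:ℝ) := by rw [hnσ]; push_cast; ring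
      rw [h3] at h2
      linarith [h1, hsplit]
    have hlow2 : (D:ℝ) ≤ ∑ i ∈ Finset.Ico (N+2) (n+1), (1 - beta i) := by
      refine hlow.trans (Finset.sum_le_sum_of_subset_of_nonneg
        (Finset.Ico_subset_Ico le_rfl (by omega)) fun i _ _ => by linarith [(hbeta i).2])
    -- product bound
    have hprod : ∏ j ∈ Finset.Icc (N+2) n, beta j ≤
        Real.exp (-∑ j ∈ Finset.Icc (N+2) n, (1 - beta j)) := by
      calc ∏ j ∈ Finset.Icc (N+2) n, beta j
          ≤ ∏ j ∈ Finset.Icc (N+2) n, Real.exp (-(1 - beta j)) :=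
            Finset.prod_le_prod (fun j _ => (hbeta j).1)
              (fun j _ => by linarith [Real.add_one_le_exp (-(1 - beta j))])
        _ = Real.exp (∑ j ∈ Finset.Icc (N+2) n, -(1 - beta j)) := (Real.exp_sum _ _).symm
        _ = Real.exp (-∑ j ∈ Finset.Icc (N+2) n, (1 - beta j)) := by
            rw [Finset.sum_neg_distrib]
    have h6Kpos : (0:ℝ) < 6 * K * (k + 1) := by positivity
    have hexp : Real.exp (-∑ j ∈ Finset.Icc (N+2) n, (1 - beta j)) ≤ 1 / (6 * K * (k+1)) := by
      have hlog : Real.log (6 * K * (k + 1)) ≤ ∑ j ∈ Finset.Icc (N+2) n, (1 - beta j) := by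
        have := Nat.le_ceil (Real.log (6 * K * (k + 1)))
        rw [← Finset.Ico_add_one_right_eq_Icc]
        linarith [hlow2]
      calc Real.exp (-∑ j ∈ Finset.Icc (N+2) n, (1 - beta j))
          ≤ Real.exp (-Real.log (6 * K * (k + 1))) := Real.exp_le_exp.mpr (by linarith)
        _ = 1 / (6 * K * (k+1)) := by
            rw [Real.exp_neg, Real.exp_log h6Kpos, one_div]
    -- sum bound
    have hNσ₃ : N ≥ σ₃ (8 * K * (3 * k + 2 + 1) - 1) := by
      rw [hN, hχ]; exact le_max_left _ _
    have hNσ₄ : N ≥ σ₄ (8 * K * (3 * k + 2 + 1) - 1) := by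
      rw [hN, hχ]; exact le_max_right _ _
    have hq : n = N + (n - (N+1)) + 1 := by omega
    have hIco : Finset.Ico (N+1) n = Finset.Icc (N+1) (N + (n - (N+1))) := by
      rw [← Finset.Ico_add_one_right_eq_Icc]; congr 1 <;> omega
    have hcast : ((8 * K * (3 * k + 2 + 1) - 1 : ℕ) : ℝ) + 1 = 8 * K * (3 * (k:ℝ) + 3) := by
      have h8 : (1:ℕ) ≤ 8 * K * (3 * k + 2 + 1) := by
        have : 1 ≤ K := Nat.one_le_iff_ne_zero.mpr hK0
        nlinarith
      push_cast [Nat.cast_sub h8]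
      ring
    have hbsum : ∑ i ∈ Finset.Ico (N+1) n, |beta (i + 1) - beta i| ≤
        1 / (8 * K * (3 * (k:ℝ) + 3)) := by
      rw [hIco, ← hcast]
      exact hσ₃ _ N hNσ₃ _
    have hlsum : ∑ i ∈ Finset.Ico (N+1) n, |lam (i + 1) - lam i| ≤
        1 / (8 * K * (3 * (k:ℝ) + 3)) := by
      rw [hIco, ← hcast]
      exact hσ₄ _ N hNσ₄ _
    have hcsum : ∑ i ∈ Finset.Ico (N+1) n,
        2 * K * (|beta (i + 1) - beta i| + |lam (i + 1) - lam i|) ≤ 1 / (6 * ((k:ℝ) + 1)) := by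
      have heq : ∑ i ∈ Finset.Ico (N+1) n,
          2 * (K:ℝ) * (|beta (i + 1) - beta i| + |lam (i + 1) - lam i|)
          = 2 * K * ((∑ i ∈ Finset.Ico (N+1) n, |beta (i + 1) - beta i|)
            + ∑ i ∈ Finset.Ico (N+1) n, |lam (i + 1) - lam i|) := by
        rw [← Finset.sum_add_distrib, Finset.mul_sum]
      rw [heq]
      have h1 : 2 * (K:ℝ) * (1 / (8 * K * (3 * (k:ℝ) + 3)) + 1 / (8 * K * (3 * (k:ℝ) + 3)))
          = 1 / (6 * ((k:ℝ) + 1)) := by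
        have hKne : (K:ℝ) ≠ 0 := ne_of_gt hKpos
        field_simp
        ring
      rw [← h1]
      have hβnn : (0:ℝ) ≤ ∑ i ∈ Finset.Ico (N+1) n, |beta (i + 1) - beta i| :=
        Finset.sum_nonneg fun i _ => abs_nonneg _
      nlinarith [hbsum, hlsum]
    -- conclusion
    have hmain := unfold n (by omega)
    have hprodnn : (0:ℝ) ≤ ∏ j ∈ Finset.Icc (N+2) n, beta j :=
      Finset.prod_nonneg fun j _ => (hbeta j).1
    have hpd : (∏ j ∈ Finset.Icc (N+2) n, beta j) * dist (x (N+1)) (x (N+2)) ≤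
        1 / (6 * K * ((k:ℝ)+1)) * (2 * K) := by
      have h0 : (0:ℝ) ≤ 1 / (6 * K * ((k:ℝ)+1)) := le_of_lt (by positivity)
      exact mul_le_mul (hprod.trans hexp) (had (N+1)) dist_nonneg h0
    have hpd2 : 1 / (6 * (K:ℝ) * ((k:ℝ)+1)) * (2 * K) = 1 / (3 * ((k:ℝ) + 1)) := by
      field_simp
      ring
    have hfin : 1 / (3 * ((k:ℝ) + 1)) + 1 / (6 * ((k:ℝ) + 1)) ≤ 1 / ((k:ℝ) + 1) :=
      tm_aux_fin _ hk1
    calc dist (x n) (x (n+1)) ≤ _ := hmain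
      _ ≤ 1 / (3 * ((k:ℝ) + 1)) + 1 / (6 * ((k:ℝ) + 1)) := by
          rw [← hpd2]; exact add_le_add hpd hcsum
      _ ≤ 1 / ((k:ℝ) + 1) := hfin
end

section
/- (Main theorem, T-asymptotic regularity under (C1_q)) In the Tikhonov-Mann setting, assume: σ₁ : ℕ → ℕ is a rate of divergence for ∑ (1−β_n); σ₃ is a Cauchy modulus for ∑ |β_{n+1}−β_n|; σ₄ is a Cauchy modulus for ∑ |λ_{n+1}−λ_n|; K ∈ ℕ satisfies K ≥ M; σ₅ : ℕ → ℕ is a rate of convergence of (β_n) towards 1; Λ ∈ ℕ, Λ ≥ 1, and N_Λ ∈ ℕ are such that λ_n ≥ 1/Λ for all n ≥ N_Λ. Define χ(k) = max{σ₃(8K(k+1)−1), σ₄(8K(k+1)−1)} and Σ(k) = σ₁(χ(3k+2) + 2 + ⌈ln(6K(k+1))⌉) + 1. Then Φ(k) = max{N_Λ, Σ(2Λ(k+1)−1), σ₅(4KΛ(k+1)−1)} is a rate of T-asymptotic regularity for (x_n), i.e., d(x_n,Tx_n) ≤ 1/(k+1) for all k ∈ ℕ and all n ≥ Φ(k). 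-/
set_option maxHeartbeats 1000000 in
theorem tm_T_as_reg_C1q
    {X : Type*} [MetricSpace X] (H : WHyp X) (C : Set X)
    (hCconv : ∀ x ∈ C, ∀ y ∈ C, ∀ l ∈ Set.Icc (0:ℝ) 1, H.W x y l ∈ C)
    (T : X → X) (hTmaps : ∀ x ∈ C, T x ∈ C)
    (hTne : ∀ x ∈ C, ∀ y ∈ C, dist (T x) (T y) ≤ dist x y)
    (p : X) (hpC : p ∈ C) (hpfix : T p = p)
    (u : X) (huC : u ∈ C)
    (lam beta : ℕ → ℝ)
    (hlam : ∀ n, lam n ∈ Set.Icc (0:ℝ) 1) (hbeta : ∀ n, beta n ∈ Set.Icc (0:ℝ) 1)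
    (x y : ℕ → X) (hx0 : x 0 ∈ C)
    (hy : ∀ n, y n = H.W u (x n) (beta n))
    (hx : ∀ n, x (n + 1) = H.W (y n) (T (y n)) (lam n))
    (M : ℝ) (hM : M = max (dist (x 0) p) (dist u p))
    (σ₁ σ₃ σ₄ σ₅ : ℕ → ℕ)
    (hσ₁ : ∀ n : ℕ, (n : ℝ) ≤ ∑ i ∈ Finset.range (σ₁ n + 1), (1 - beta i))
    (hσ₃ : ∀ k : ℕ, ∀ n ≥ σ₃ k, ∀ q : ℕ,
      ∑ i ∈ Finset.Icc (n + 1) (n + q), |beta (i + 1) - beta i| ≤ 1 / (k + 1))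
    (hσ₄ : ∀ k : ℕ, ∀ n ≥ σ₄ k, ∀ q : ℕ,
      ∑ i ∈ Finset.Icc (n + 1) (n + q), |lam (i + 1) - lam i| ≤ 1 / (k + 1))
    (K : ℕ) (hK : M ≤ (K : ℝ))
    (hσ₅ : ∀ k : ℕ, ∀ n ≥ σ₅ k, |beta n - 1| ≤ 1 / (k + 1))
    (Λ : ℕ) (hΛ : 1 ≤ Λ) (NΛ : ℕ)
    (hNΛ : ∀ n ≥ NΛ, 1 / (Λ : ℝ) ≤ lam n)
    (χ : ℕ → ℕ)
    (hχ : ∀ k : ℕ, χ k = max (σ₃ (8 * K * (k + 1) - 1)) (σ₄ (8 * K * (k + 1) - 1)))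
    (Sg : ℕ → ℕ)
    (hSg : ∀ k : ℕ,
      Sg k = σ₁ (χ (3 * k + 2) + 2 + ⌈Real.log (6 * K * (k + 1))⌉₊) + 1)
    (Φ : ℕ → ℕ)
    (hΦ : ∀ k : ℕ,
      Φ k = max NΛ (max (Sg (2 * Λ * (k + 1) - 1)) (σ₅ (4 * K * Λ * (k + 1) - 1)))) :
    ∀ k : ℕ, ∀ n ≥ Φ k, dist (x n) (T (x n)) ≤ 1 / (k + 1) := by
  -- basic W facts
  have hWone : ∀ a b : X, H.W a b 1 = b := by
    intro a b
    have h := H.W1 a b b 1 ⟨zero_le_one, le_rfl⟩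
    simp only [sub_self, zero_mul, one_mul, dist_self] at h
    have h2 : dist b (H.W a b 1) ≤ 0 := by linarith
    exact (dist_le_zero.mp h2).symm
  have hWzero : ∀ a b : X, H.W a b 0 = a := by
    intro a b
    have h := H.W1 a b a 0 ⟨le_rfl, zero_le_one⟩
    simp only [sub_zero, one_mul, zero_mul, dist_self] at h
    have h2 : dist a (H.W a b 0) ≤ 0 := by linarith
    exact (dist_le_zero.mp h2).symm
  have hM0 : (0:ℝ) ≤ M := hM ▸ le_trans dist_nonneg (le_max_left _ _)
  -- membership and boundedness
  have hxprop : ∀ n, x n ∈ C ∧ dist (x n) p ≤ M := by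
    intro n
    induction n with
    | zero => exact ⟨hx0, hM ▸ le_max_left _ _⟩
    | succ n ih =>
      obtain ⟨hxC, hxM⟩ := ih
      have hyC : y n ∈ C := by
        rw [hy n]; exact hCconv u huC (x n) hxC (beta n) (hbeta n)
      have hyM : dist (y n) p ≤ M := by
        have h := H.W1 u (x n) p (beta n) (hbeta n)
        rw [← hy n] at h
        have huM : dist p u ≤ M := by rw [dist_comm]; exact hM ▸ le_max_right _ _
        have hxM' : dist p (x n) ≤ M := by rw [dist_comm]; exact hxM
        have hb := hbeta n
        rw [dist_comm]
        nlinarith [hb.1, hb.2]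
      have hTyC : T (y n) ∈ C := hTmaps _ hyC
      have hTyM : dist p (T (y n)) ≤ M := by
        have := hTne p hpC (y n) hyC
        rw [hpfix] at this
        exact le_trans this (by rw [dist_comm]; exact hyM)
      refine ⟨?_, ?_⟩
      · rw [hx n]; exact hCconv (y n) hyC (T (y n)) hTyC (lam n) (hlam n)
      · have h := H.W1 (y n) (T (y n)) p (lam n) (hlam n)
        rw [← hx n] at h
        have hl := hlam n
        have hyM' : dist p (y n) ≤ M := by rw [dist_comm]; exact hyM
        rw [dist_comm]
        nlinarith [hl.1, hl.2]
  have hxC : ∀ n, x n ∈ C := fun n => (hxprop n).1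
  have hxM : ∀ n, dist (x n) p ≤ M := fun n => (hxprop n).2
  have hyC : ∀ n, y n ∈ C := fun n => by
    rw [hy n]; exact hCconv u huC (x n) (hxC n) (beta n) (hbeta n)
  have hyM : ∀ n, dist (y n) p ≤ M := by
    intro n
    have h := H.W1 u (x n) p (beta n) (hbeta n)
    rw [← hy n] at h
    have huM : dist p u ≤ M := by rw [dist_comm]; exact hM ▸ le_max_right _ _
    have hxM' : dist p (x n) ≤ M := by rw [dist_comm]; exact hxM n
    have hb := hbeta n
    rw [dist_comm]
    nlinarith [hb.1, hb.2]
  -- distance identities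
  have dxy : ∀ n, dist (x n) (y n) = (1 - beta n) * dist u (x n) := by
    intro n
    have h1 := H.W2 u (x n) (beta n) (hbeta n) 1 ⟨zero_le_one, le_rfl⟩
    rw [hWone] at h1
    rw [dist_comm, hy n, h1, abs_sub_comm, abs_of_nonneg (by linarith [(hbeta n).2])]
  have dxy2 : ∀ n, dist (x (n+1)) (y n) = lam n * dist (y n) (T (y n)) := by
    intro n
    have h1 := H.W2 (y n) (T (y n)) (lam n) (hlam n) 0 ⟨le_rfl, zero_le_one⟩
    rw [hWzero] at h1
    rw [hx n, h1, sub_zero, abs_of_nonneg (hlam n).1]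
  have dxT : ∀ n, dist (x (n+1)) (T (y n)) = (1 - lam n) * dist (y n) (T (y n)) := by
    intro n
    have h1 := H.W2 (y n) (T (y n)) (lam n) (hlam n) 1 ⟨zero_le_one, le_rfl⟩
    rw [hWone] at h1
    rw [hx n, h1, abs_sub_comm, abs_of_nonneg (by linarith [(hlam n).2])]
  -- 2M bounds
  have hux : ∀ n, dist u (x n) ≤ 2 * M := fun n =>
    le_trans (dist_triangle u p (x n))
      (by have := hxM n; rw [dist_comm (x n) p] at this
          have h2 : dist u p ≤ M := hM ▸ le_max_right _ _
          linarith)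
  have hyTy : ∀ n, dist (y n) (T (y n)) ≤ 2 * M := by
    intro n
    have h1 := hyM n
    have h2 := hTne p hpC (y n) (hyC n)
    rw [hpfix] at h2
    calc dist (y n) (T (y n)) ≤ dist (y n) p + dist p (T (y n)) := dist_triangle _ _ _
      _ ≤ M + M := by
          have : dist p (T (y n)) ≤ M := le_trans h2 (by rw [dist_comm]; exact h1)
          linarith
      _ = 2 * M := by ring
  have haB : ∀ m n : ℕ, dist (x m) (x n) ≤ 2 * M := by
    intro m n
    calc dist (x m) (x n) ≤ dist (x m) p + dist p (x n) := dist_triangle _ _ _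
      _ ≤ M + M := by have := hxM m; have h2 := hxM n; rw [dist_comm p] ; linarith
      _ = 2 * M := by ring
  -- recurrence
  have hrec : ∀ n, dist (x (n+2)) (x (n+1)) ≤ beta n * dist (x (n+1)) (x n)
      + 2 * M * (|lam (n+1) - lam n| + |beta (n+1) - beta n|) := by
    intro n
    have t1 : dist (x (n+2)) (H.W (y (n+1)) (T (y (n+1))) (lam n))
        = |lam (n+1) - lam n| * dist (y (n+1)) (T (y (n+1))) := by
      rw [hx (n+1)]
      exact H.W2 (y (n+1)) (T (y (n+1))) (lam (n+1)) (hlam (n+1)) (lam n) (hlam n)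
    have t2 : dist (H.W (y (n+1)) (T (y (n+1))) (lam n)) (x (n+1))
        ≤ (1 - lam n) * dist (y (n+1)) (y n) + lam n * dist (T (y (n+1))) (T (y n)) := by
      rw [hx n]
      exact H.W4 (y (n+1)) (y n) (T (y (n+1))) (T (y n)) (lam n) (hlam n)
    have t3 : dist (T (y (n+1))) (T (y n)) ≤ dist (y (n+1)) (y n) :=
      hTne _ (hyC (n+1)) _ (hyC n)
    have t4 : dist (y (n+1)) (y n) ≤ |beta (n+1) - beta n| * dist u (x (n+1))
        + beta n * dist (x (n+1)) (x n) := by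
      have s1 : dist (y (n+1)) (H.W u (x (n+1)) (beta n))
          = |beta (n+1) - beta n| * dist u (x (n+1)) := by
        rw [hy (n+1)]
        exact H.W2 u (x (n+1)) (beta (n+1)) (hbeta (n+1)) (beta n) (hbeta n)
      have s2 : dist (H.W u (x (n+1)) (beta n)) (y n)
          ≤ (1 - beta n) * dist u u + beta n * dist (x (n+1)) (x n) := by
        rw [hy n]
        exact H.W4 u u (x (n+1)) (x n) (beta n) (hbeta n)
      rw [dist_self] at s2
      calc dist (y (n+1)) (y n) ≤ dist (y (n+1)) (H.W u (x (n+1)) (beta n))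
            + dist (H.W u (x (n+1)) (beta n)) (y n) := dist_triangle _ _ _
        _ ≤ |beta (n+1) - beta n| * dist u (x (n+1)) + beta n * dist (x (n+1)) (x n) := by
            rw [s1]; linarith
    have tri : dist (x (n+2)) (x (n+1)) ≤ dist (x (n+2)) (H.W (y (n+1)) (T (y (n+1))) (lam n))
        + dist (H.W (y (n+1)) (T (y (n+1))) (lam n)) (x (n+1)) := dist_triangle _ _ _
    have hl := hlam n
    have b1 : |lam (n+1) - lam n| * dist (y (n+1)) (T (y (n+1)))
        ≤ |lam (n+1) - lam n| * (2 * M) :=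
      mul_le_mul_of_nonneg_left (hyTy (n+1)) (abs_nonneg _)
    have b2 : |beta (n+1) - beta n| * dist u (x (n+1)) ≤ |beta (n+1) - beta n| * (2 * M) :=
      mul_le_mul_of_nonneg_left (hux (n+1)) (abs_nonneg _)
    nlinarith [t1, t2, t3, t4, tri, hl.1, hl.2, dist_nonneg (x := y (n+1)) (y := y n),
      mul_le_mul_of_nonneg_left t3 hl.1,
      mul_le_mul_of_nonneg_left t4 (sub_nonneg.mpr hl.2)]
  -- unrolling
  have unroll : ∀ N n : ℕ, N ≤ n → dist (x (n+1)) (x n) ≤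
      (∏ i ∈ Finset.Ico N n, beta i) * dist (x (N+1)) (x N)
      + ∑ i ∈ Finset.Ico N n, 2 * M * (|lam (i+1) - lam i| + |beta (i+1) - beta i|) := by
    intro N n
    induction n with
    | zero =>
      intro h
      have hN0 : N = 0 := Nat.le_zero.mp h
      subst hN0; simp
    | succ n ih =>
      intro hNn
      rcases Nat.lt_or_ge N (n+1) with h | h
      · have hN : N ≤ n := Nat.lt_succ_iff.mp h
        have ihn := ih hN
        rw [Finset.prod_Ico_succ_top hN, Finset.sum_Ico_succ_top hN]
        have hP : (0:ℝ) ≤ ∏ i ∈ Finset.Ico N n, beta i :=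
          Finset.prod_nonneg (fun i _ => (hbeta i).1)
        have hS : (0:ℝ) ≤ ∑ i ∈ Finset.Ico N n, 2 * M * (|lam (i+1) - lam i| + |beta (i+1) - beta i|) :=
          Finset.sum_nonneg (fun i _ => by positivity)
        have hb := hbeta n
        have haN : (0:ℝ) ≤ dist (x (N+1)) (x N) := dist_nonneg
        have h1 := hrec n
        nlinarith [mul_le_mul_of_nonneg_left ihn hb.1, mul_nonneg (sub_nonneg.mpr hb.2) hS, mul_nonneg (sub_nonneg.mpr hb.2) (mul_nonneg hP haN)]
      · have hNe : N = n + 1 := le_antisymm hNn h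
        subst hNe; simp
  -- exp bound on product
  have prodexp : ∀ N n : ℕ, (∏ i ∈ Finset.Ico N n, beta i)
      ≤ Real.exp (-(∑ i ∈ Finset.Ico N n, (1 - beta i))) := by
    intro N n
    calc (∏ i ∈ Finset.Ico N n, beta i)
        ≤ ∏ i ∈ Finset.Ico N n, Real.exp (beta i - 1) :=
          Finset.prod_le_prod (fun i _ => (hbeta i).1)
            (fun i _ => by
              have := Real.add_one_le_exp (beta i - 1); linarith)
      _ = Real.exp (∑ i ∈ Finset.Ico N n, (beta i - 1)) := by
          rw [Real.exp_sum]
      _ = Real.exp (-(∑ i ∈ Finset.Ico N n, (1 - beta i))) := by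
          congr 1
          rw [← Finset.sum_neg_distrib]
          exact Finset.sum_congr rfl (fun i _ => by ring)
  -- trivial case K = 0
  rcases Nat.eq_zero_or_pos K with hK0 | hK1
  · intro k n _
    have hMz : M = 0 := le_antisymm (by rw [hK0] at hK; exact_mod_cast hK) hM0
    have hxp : x n = p := by
      have := hxM n; rw [hMz] at this
      exact dist_le_zero.mp this
    rw [hxp, hpfix, dist_self]
    positivity
  -- main case : 1 ≤ K
  have hKr : (1:ℝ) ≤ (K:ℝ) := by exact_mod_cast hK1
  have hMK : 2 * M ≤ 2 * (K:ℝ) := by linarith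
  -- auxiliary asymptotic regularity of (x_n)
  have aux : ∀ k n : ℕ, Sg k ≤ n → dist (x (n+1)) (x n) ≤ 1 / ((k:ℝ)+1) := by
    intro k n hn
    set D := ⌈Real.log (6 * K * (k + 1))⌉₊ with hD
    set N := χ (3*k+2) + 1 with hNdef
    set j := N + 1 + D with hj
    have hSgk : Sg k = σ₁ j + 1 := by
      have he : j = χ (3*k+2) + 2 + D := by omega
      rw [hSg k, ← hD, ← he]
    rw [hSgk] at hn
    -- j ≤ σ₁ j + 1
    have hsumj := hσ₁ j
    have hub : ∑ i ∈ Finset.range (σ₁ j + 1), (1 - beta i) ≤ ((σ₁ j + 1 : ℕ) : ℝ) := by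
      calc ∑ i ∈ Finset.range (σ₁ j + 1), (1 - beta i)
          ≤ ∑ _i ∈ Finset.range (σ₁ j + 1), (1:ℝ) :=
            Finset.sum_le_sum (fun i _ => by linarith [(hbeta i).1])
        _ = ((σ₁ j + 1 : ℕ) : ℝ) := by simp
    have hjle : j ≤ σ₁ j + 1 := by exact_mod_cast le_trans hsumj hub
    have hNn : N ≤ n := by omega
    -- sum over range n
    have hsn : (j:ℝ) ≤ ∑ i ∈ Finset.range n, (1 - beta i) := by
      refine le_trans hsumj (Finset.sum_le_sum_of_subset_of_nonneg ?_ ?_)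
      · exact Finset.range_subset_range.mpr (by omega)
      · intro i _ _; linarith [(hbeta i).2]
    have hsN : ∑ i ∈ Finset.range N, (1 - beta i) ≤ (N:ℝ) := by
      calc ∑ i ∈ Finset.range N, (1 - beta i)
          ≤ ∑ _i ∈ Finset.range N, (1:ℝ) :=
            Finset.sum_le_sum (fun i _ => by linarith [(hbeta i).1])
        _ = (N:ℝ) := by simp
    have hIcosum : ((D:ℝ) + 1) ≤ ∑ i ∈ Finset.Ico N n, (1 - beta i) := by
      rw [Finset.sum_Ico_eq_sub _ hNn]
      have : ((j:ℕ):ℝ) = (N:ℝ) + 1 + (D:ℝ) := by rw [hj]; push_cast; ring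
      rw [this] at hsn
      linarith
    -- positivity
    have h6pos : (0:ℝ) < 6 * K * (k + 1) := by positivity
    have hlogD : Real.log (6 * K * (k + 1)) ≤ (D:ℝ) := Nat.le_ceil _
    -- product bound
    have hprod : (∏ i ∈ Finset.Ico N n, beta i) ≤ (6 * (K:ℝ) * (k + 1))⁻¹ := by
      calc (∏ i ∈ Finset.Ico N n, beta i)
          ≤ Real.exp (-(∑ i ∈ Finset.Ico N n, (1 - beta i))) := prodexp N n
        _ ≤ Real.exp (-(Real.log (6 * K * (k + 1)))) :=
            Real.exp_le_exp.mpr (by linarith)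
        _ = (6 * (K:ℝ) * (k + 1))⁻¹ := by
            rw [Real.exp_neg, Real.exp_log h6pos]
    -- sum of perturbations
    set m : ℕ := 8 * K * (3*k+3) - 1 with hm
    have hmc : ((m:ℕ):ℝ) + 1 = 8 * (K:ℝ) * (3*(k:ℝ)+3) := by
      have h1 : m + 1 = 8 * K * (3*k+3) := by
        have : 1 ≤ 8 * K * (3*k+3) := by nlinarith [hK1]
        omega
      have := congrArg (fun t : ℕ => (t:ℝ)) h1
      push_cast at this
      linarith
    have hχk : χ (3*k+2) = max (σ₃ m) (σ₄ m) := by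
      have h3 : (3*k+2)+1 = 3*k+3 := by omega
      rw [hχ (3*k+2), h3, ← hm]
    have hIcoIcc : Finset.Ico N n = Finset.Icc (χ (3*k+2) + 1) (χ (3*k+2) + (n - N)) := by
      rw [← Finset.Ico_add_one_right_eq_Icc]
      congr 1
      omega
    have hsb : ∑ i ∈ Finset.Ico N n, |beta (i+1) - beta i| ≤ 1 / ((m:ℝ) + 1) := by
      rw [hIcoIcc]
      exact hσ₃ m (χ (3*k+2)) (by rw [hχk]; exact le_max_left _ _) (n - N)
    have hsl : ∑ i ∈ Finset.Ico N n, |lam (i+1) - lam i| ≤ 1 / ((m:ℝ) + 1) := by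
      rw [hIcoIcc]
      exact hσ₄ m (χ (3*k+2)) (by rw [hχk]; exact le_max_right _ _) (n - N)
    have hsumc : ∑ i ∈ Finset.Ico N n, 2 * M * (|lam (i+1) - lam i| + |beta (i+1) - beta i|)
        ≤ 1 / (6 * ((k:ℝ) + 1)) := by
      have e1 : ∑ i ∈ Finset.Ico N n, 2 * M * (|lam (i+1) - lam i| + |beta (i+1) - beta i|)
          = 2 * M * ((∑ i ∈ Finset.Ico N n, |lam (i+1) - lam i|)
            + ∑ i ∈ Finset.Ico N n, |beta (i+1) - beta i|) := by
        rw [← Finset.sum_add_distrib, Finset.mul_sum]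
      rw [e1]
      set S1 := ∑ i ∈ Finset.Ico N n, |lam (i+1) - lam i| with hS1
      set S2 := ∑ i ∈ Finset.Ico N n, |beta (i+1) - beta i| with hS2
      have h2 : S1 + S2 ≤ 1 / ((m:ℝ)+1) + 1 / ((m:ℝ)+1) := add_le_add hsl hsb
      have hnn : (0:ℝ) ≤ S1 + S2 := by
        rw [hS1, hS2]; positivity
      calc 2 * M * (S1 + S2) ≤ 2 * (K:ℝ) * (S1 + S2) :=
            mul_le_mul_of_nonneg_right hMK hnn
        _ ≤ 2 * (K:ℝ) * (1 / ((m:ℝ)+1) + 1 / ((m:ℝ)+1)) :=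
            mul_le_mul_of_nonneg_left h2 (by positivity)
        _ = 1 / (6 * ((k:ℝ) + 1)) := by
            rw [hmc]
            have hKne : (K:ℝ) ≠ 0 := by linarith
            field_simp
            ring
    -- combine
    have hmain := unroll N n hNn
    have haN : dist (x (N+1)) (x N) ≤ 2 * (K:ℝ) := le_trans (haB _ _) hMK
    have hP0 : (0:ℝ) ≤ ∏ i ∈ Finset.Ico N n, beta i :=
      Finset.prod_nonneg (fun i _ => (hbeta i).1)
    have hPa : (∏ i ∈ Finset.Ico N n, beta i) * dist (x (N+1)) (x N)
        ≤ (6 * (K:ℝ) * (k + 1))⁻¹ * (2 * K) := by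
      apply mul_le_mul hprod haN dist_nonneg (by positivity)
    have e2 : (6 * (K:ℝ) * (k + 1))⁻¹ * (2 * K) = 1 / (3 * ((k:ℝ)+1)) := by
      have hKne : (K:ℝ) ≠ 0 := by linarith
      field_simp
      ring
    rw [e2] at hPa
    have hfin : 1 / (3 * ((k:ℝ)+1)) + 1 / (6 * ((k:ℝ)+1)) ≤ 1 / ((k:ℝ)+1) := by
      rw [div_add_div _ _ (by positivity) (by positivity), div_le_div_iff₀ (by positivity) (by positivity)]
      nlinarith [sq_nonneg ((k:ℝ)+1)]
    linarith
  -- final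
  intro k n hn
  rw [hΦ k] at hn
  simp only [max_le_iff] at hn
  obtain ⟨hnN, hnS, hn5⟩ := hn
  have hΛr : (1:ℝ) ≤ (Λ:ℝ) := by exact_mod_cast hΛ
  have hΛ0 : (0:ℝ) < (Λ:ℝ) := by linarith
  have hk0 : (0:ℝ) < (k:ℝ) + 1 := by positivity
  -- bound on a n
  have ha' := aux (2*Λ*(k+1)-1) n hnS
  have ecast : ((2*Λ*(k+1)-1 : ℕ) : ℝ) + 1 = 2*(Λ:ℝ)*((k:ℝ)+1) := by
    have h1 : (2*Λ*(k+1)-1 : ℕ) + 1 = 2*Λ*(k+1) := by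
      have : 0 < 2*Λ*(k+1) := Nat.mul_pos (Nat.mul_pos (by omega) (by omega)) (by omega)
      omega
    have := congrArg (fun t : ℕ => (t:ℝ)) h1
    push_cast at this
    linarith
  rw [ecast] at ha'
  -- bound on d n
  have hb5 := hσ₅ (4*K*Λ*(k+1)-1) n hn5
  have ecast2 : ((4*K*Λ*(k+1)-1 : ℕ) : ℝ) + 1 = 4*(K:ℝ)*(Λ:ℝ)*((k:ℝ)+1) := by
    have h1 : (4*K*Λ*(k+1)-1 : ℕ) + 1 = 4*K*Λ*(k+1) := by
      have : 0 < 4*K*Λ*(k+1) :=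
        Nat.mul_pos (Nat.mul_pos (Nat.mul_pos (by omega) hK1) (by omega)) (by omega)
      omega
    have := congrArg (fun t : ℕ => (t:ℝ)) h1
    push_cast at this
    linarith
  rw [ecast2] at hb5
  have hbn1 : 1 - beta n ≤ 1 / (4*(K:ℝ)*(Λ:ℝ)*((k:ℝ)+1)) := by
    have : |beta n - 1| = 1 - beta n := by
      rw [abs_sub_comm, abs_of_nonneg (by linarith [(hbeta n).2])]
    linarith [this ▸ hb5]
  have hd : dist (x n) (y n) ≤ 1 / (2*(Λ:ℝ)*((k:ℝ)+1)) := by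
    rw [dxy n]
    calc (1 - beta n) * dist u (x n)
        ≤ (1 / (4*(K:ℝ)*(Λ:ℝ)*((k:ℝ)+1))) * (2*(K:ℝ)) := by
          apply mul_le_mul hbn1 (le_trans (hux n) hMK) dist_nonneg (by positivity)
      _ = 1 / (2*(Λ:ℝ)*((k:ℝ)+1)) := by
          have hKne : (K:ℝ) ≠ 0 := by linarith
          field_simp
          ring
  -- lambda lower bound
  have hlamn : 1 / (Λ:ℝ) ≤ lam n := hNΛ n hnN
  -- d(y_n, Ty_n) bound
  have htri : dist (x (n+1)) (y n) ≤ dist (x (n+1)) (x n) + dist (x n) (y n) :=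
    dist_triangle _ _ _
  have hyT : dist (y n) (T (y n)) ≤ (Λ:ℝ) * (dist (x (n+1)) (x n) + dist (x n) (y n)) := by
    have h1 := dxy2 n
    have hd0 : (0:ℝ) ≤ dist (y n) (T (y n)) := dist_nonneg
    have h2 : (1 / (Λ:ℝ)) * dist (y n) (T (y n)) ≤ lam n * dist (y n) (T (y n)) :=
      mul_le_mul_of_nonneg_right hlamn hd0
    rw [← h1] at h2
    have h3 : (Λ:ℝ) * ((1 / (Λ:ℝ)) * dist (y n) (T (y n))) = dist (y n) (T (y n)) := by
      field_simp
    nlinarith [mul_le_mul_of_nonneg_left (le_trans h2 htri) (le_of_lt hΛ0)]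
  -- final decomposition
  have hTc : dist (T (y n)) (T (x n)) ≤ dist (y n) (x n) := hTne _ (hyC n) _ (hxC n)
  have htri2 : dist (x n) (T (x n)) ≤ dist (x n) (x (n+1)) + dist (x (n+1)) (T (y n))
      + dist (T (y n)) (T (x n)) := dist_triangle4 _ _ _ _
  rw [dxT n] at htri2
  have hlam2 : (1 - lam n) * (Λ:ℝ) ≤ (Λ:ℝ) - 1 := by
    have : (Λ:ℝ) * (1 / (Λ:ℝ)) = 1 := by field_simp
    nlinarith [mul_le_mul_of_nonneg_left hlamn (le_of_lt hΛ0)]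
  have hl := hlam n
  have hdyT0 : (0:ℝ) ≤ dist (x (n+1)) (x n) + dist (x n) (y n) := by positivity
  have key : dist (x n) (T (x n)) ≤ (Λ:ℝ) * (dist (x (n+1)) (x n) + dist (x n) (y n)) := by
    have s1 : (1 - lam n) * dist (y n) (T (y n))
        ≤ (1 - lam n) * ((Λ:ℝ) * (dist (x (n+1)) (x n) + dist (x n) (y n))) :=
      mul_le_mul_of_nonneg_left hyT (by linarith [hl.2])
    have s2 : (1 - lam n) * ((Λ:ℝ) * (dist (x (n+1)) (x n) + dist (x n) (y n)))
        ≤ ((Λ:ℝ) - 1) * (dist (x (n+1)) (x n) + dist (x n) (y n)) := by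
      have := mul_le_mul_of_nonneg_right hlam2 hdyT0
      nlinarith
    have hcomm1 : dist (x n) (x (n+1)) = dist (x (n+1)) (x n) := dist_comm _ _
    have hcomm2 : dist (y n) (x n) = dist (x n) (y n) := dist_comm _ _
    nlinarith [htri2, hTc]
  calc dist (x n) (T (x n)) ≤ (Λ:ℝ) * (dist (x (n+1)) (x n) + dist (x n) (y n)) := key
    _ ≤ (Λ:ℝ) * (1 / (2*(Λ:ℝ)*((k:ℝ)+1)) + 1 / (2*(Λ:ℝ)*((k:ℝ)+1))) :=
        mul_le_mul_of_nonneg_left (add_le_add ha' hd) (le_of_lt hΛ0)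
    _ = 1 / ((k:ℝ)+1) := by
        have hΛne : (Λ:ℝ) ≠ 0 := ne_of_gt hΛ0
        have hkne : ((k:ℝ)+1) ≠ 0 := ne_of_gt hk0
        rw [← add_div, eq_div_iff hkne, mul_comm]
        field_simp
        ring
end

section
/- (Main theorem, asymptotic regularity under (C2_q)) In the Tikhonov-Mann setting, assume: β_n > 0 for all n; σ₂ : ℕ → ℕ is a rate of convergence towards 0 of the sequence of partial products P_n = ∏_{i=0}^{n} β_{i+1}; σ₃ is a Cauchy modulus for the convergent series ∑ |β_{n+1}−β_n|; σ₄ is a Cauchy modulus for the convergent series ∑ |λ_{n+1}−λ_n|; K ∈ ℕ satisfies K ≥ M. Define χ(k) = max{σ₃(8K(k+1)−1), σ₄(8K(k+1)−1)}, and suppose ψ₀ : ℕ → ℕ takes positive values and satisfies 1/ψ₀(k) ≤ P_{χ(3k+2)} for all k ∈ ℕ. Then Σ̃(k) = max{σ₂(6K(k+1)ψ₀(k)−1), χ(3k+2)+1} + 1 is a rate of asymptotic regularity for (x_n), i.e., d(x_n,x_{n+1}) ≤ 1/(k+1) for all k ∈ ℕ and all n ≥ Σ̃(k). -/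
theorem tm_as_reg_C2q
    {X : Type*} [MetricSpace X] (H : WHyp X) (C : Set X)
    (hCconv : ∀ x ∈ C, ∀ y ∈ C, ∀ l ∈ Set.Icc (0:ℝ) 1, H.W x y l ∈ C)
    (T : X → X) (hTmaps : ∀ x ∈ C, T x ∈ C)
    (hTne : ∀ x ∈ C, ∀ y ∈ C, dist (T x) (T y) ≤ dist x y)
    (p : X) (hpC : p ∈ C) (hpfix : T p = p)
    (u : X) (huC : u ∈ C)
    (lam beta : ℕ → ℝ)
    (hlam : ∀ n, lam n ∈ Set.Icc (0:ℝ) 1) (hbeta : ∀ n, beta n ∈ Set.Icc (0:ℝ) 1)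
    (x y : ℕ → X) (hx0 : x 0 ∈ C)
    (hy : ∀ n, y n = H.W u (x n) (beta n))
    (hx : ∀ n, x (n + 1) = H.W (y n) (T (y n)) (lam n))
    (M : ℝ) (hM : M = max (dist (x 0) p) (dist u p))
    (hbpos : ∀ n, 0 < beta n)
    (σ₂ σ₃ σ₄ : ℕ → ℕ)
    (hσ₂ : ∀ k : ℕ, ∀ n ≥ σ₂ k,
      |∏ i ∈ Finset.range (n + 1), beta (i + 1)| ≤ 1 / (k + 1))
    (hσ₃ : ∀ k : ℕ, ∀ n ≥ σ₃ k, ∀ q : ℕ,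
      ∑ i ∈ Finset.Icc (n + 1) (n + q), |beta (i + 1) - beta i| ≤ 1 / (k + 1))
    (hσ₄ : ∀ k : ℕ, ∀ n ≥ σ₄ k, ∀ q : ℕ,
      ∑ i ∈ Finset.Icc (n + 1) (n + q), |lam (i + 1) - lam i| ≤ 1 / (k + 1))
    (K : ℕ) (hK : M ≤ (K : ℝ))
    (χ : ℕ → ℕ)
    (hχ : ∀ k : ℕ, χ k = max (σ₃ (8 * K * (k + 1) - 1)) (σ₄ (8 * K * (k + 1) - 1)))
    (ψ₀ : ℕ → ℕ) (hψ₀pos : ∀ k, 0 < ψ₀ k)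
    (hψ₀ : ∀ k : ℕ, 1 / (ψ₀ k : ℝ) ≤ ∏ i ∈ Finset.range (χ (3 * k + 2) + 1), beta (i + 1))
    (Sg : ℕ → ℕ)
    (hSg : ∀ k : ℕ,
      Sg k = max (σ₂ (6 * K * (k + 1) * ψ₀ k - 1)) (χ (3 * k + 2) + 1) + 1) :
    ∀ k : ℕ, ∀ n ≥ Sg k, dist (x n) (x (n + 1)) ≤ 1 / (k + 1) := by
  -- basic nonnegativity and bounds
  have hM0 : 0 ≤ M := hM ▸ le_trans dist_nonneg (le_max_left _ _)
  have hup : dist u p ≤ M := hM ▸ le_max_right _ _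
  have hC : ∀ n, x n ∈ C := by
    intro n
    induction n with
    | zero => exact hx0
    | succ n ih =>
      have hyn : y n ∈ C := by
        rw [hy n]; exact hCconv u huC (x n) ih (beta n) (hbeta n)
      rw [hx n]
      exact hCconv (y n) hyn (T (y n)) (hTmaps _ hyn) (lam n) (hlam n)
  have hyC : ∀ n, y n ∈ C := by
    intro n; rw [hy n]; exact hCconv u huC (x n) (hC n) (beta n) (hbeta n)
  have hTp : ∀ z ∈ C, dist (T z) p ≤ dist z p := by
    intro z hz
    calc dist (T z) p = dist (T z) (T p) := by rw [hpfix]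
      _ ≤ dist z p := hTne z hz p hpC
  have hxp : ∀ n, dist (x n) p ≤ M := by
    intro n
    induction n with
    | zero => exact hM ▸ le_max_left _ _
    | succ n ih =>
      have hynp : dist (y n) p ≤ M := by
        rw [hy n, dist_comm]
        have h1 := H.W1 u (x n) p (beta n) (hbeta n)
        have hb := hbeta n
        have e1 : dist p u = dist u p := dist_comm _ _
        have e2 : dist p (x n) = dist (x n) p := dist_comm _ _
        rw [e1, e2] at h1
        nlinarith [hb.1, hb.2, hup, ih]
      rw [hx n, dist_comm]
      have h1 := H.W1 (y n) (T (y n)) p (lam n) (hlam n)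
      have hl := hlam n
      have e1 : dist p (y n) = dist (y n) p := dist_comm _ _
      have e2 : dist p (T (y n)) = dist (T (y n)) p := dist_comm _ _
      rw [e1, e2] at h1
      have h2 := hTp (y n) (hyC n)
      nlinarith [hl.1, hl.2, hynp]
  have hyp' : ∀ n, dist (y n) p ≤ M := by
    intro n
    rw [hy n, dist_comm]
    have h1 := H.W1 u (x n) p (beta n) (hbeta n)
    have hb := hbeta n
    have e1 : dist p u = dist u p := dist_comm _ _
    have e2 : dist p (x n) = dist (x n) p := dist_comm _ _
    rw [e1, e2] at h1
    nlinarith [hb.1, hb.2, hup, hxp n]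
  have hux : ∀ n, dist u (x n) ≤ 2 * M := by
    intro n
    calc dist u (x n) ≤ dist u p + dist p (x n) := dist_triangle _ _ _
      _ ≤ M + M := add_le_add hup (by rw [dist_comm]; exact hxp n)
      _ = 2 * M := by ring
  have hyT : ∀ n, dist (y n) (T (y n)) ≤ 2 * M := by
    intro n
    calc dist (y n) (T (y n)) ≤ dist (y n) p + dist p (T (y n)) := dist_triangle _ _ _
      _ ≤ M + M := add_le_add (hyp' n)
          (by rw [dist_comm]; exact le_trans (hTp (y n) (hyC n)) (hyp' n))
      _ = 2 * M := by ring
  have haa : ∀ n, dist (x n) (x (n + 1)) ≤ 2 * M := by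
    intro n
    calc dist (x n) (x (n + 1)) ≤ dist (x n) p + dist p (x (n + 1)) := dist_triangle _ _ _
      _ ≤ M + M := add_le_add (hxp n) (by rw [dist_comm]; exact hxp (n + 1))
      _ = 2 * M := by ring
  -- the key one-step recursion
  have hrec : ∀ n, dist (x (n + 1)) (x (n + 2)) ≤
      beta (n + 1) * dist (x n) (x (n + 1)) +
        2 * M * (|beta (n + 1) - beta n| + |lam (n + 1) - lam n|) := by
    intro n
    have h1 : dist (y n) (y (n + 1)) ≤
        |beta (n + 1) - beta n| * dist u (x n) +
          beta (n + 1) * dist (x n) (x (n + 1)) := by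
      rw [hy n, hy (n + 1)]
      have t1 := H.W2 u (x n) (beta n) (hbeta n) (beta (n + 1)) (hbeta (n + 1))
      have t2 := H.W4 u u (x n) (x (n + 1)) (beta (n + 1)) (hbeta (n + 1))
      rw [dist_self] at t2
      calc dist (H.W u (x n) (beta n)) (H.W u (x (n + 1)) (beta (n + 1)))
          ≤ dist (H.W u (x n) (beta n)) (H.W u (x n) (beta (n + 1))) +
            dist (H.W u (x n) (beta (n + 1))) (H.W u (x (n + 1)) (beta (n + 1))) :=
            dist_triangle _ _ _
        _ ≤ |beta (n + 1) - beta n| * dist u (x n) +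
            beta (n + 1) * dist (x n) (x (n + 1)) := by
            rw [t1, abs_sub_comm]; linarith [t2]
    have h2 : dist (x (n + 1)) (x (n + 2)) ≤
        dist (y n) (y (n + 1)) +
          |lam (n + 1) - lam n| * dist (y (n + 1)) (T (y (n + 1))) := by
      rw [hx n, hx (n + 1)]
      have s1 := H.W4 (y n) (y (n + 1)) (T (y n)) (T (y (n + 1))) (lam n) (hlam n)
      have s2 := H.W2 (y (n + 1)) (T (y (n + 1))) (lam n) (hlam n) (lam (n + 1))
        (hlam (n + 1))
      have sT := hTne (y n) (hyC n) (y (n + 1)) (hyC (n + 1))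
      have hl := hlam n
      calc dist (H.W (y n) (T (y n)) (lam n)) (H.W (y (n + 1)) (T (y (n + 1))) (lam (n + 1)))
          ≤ dist (H.W (y n) (T (y n)) (lam n)) (H.W (y (n + 1)) (T (y (n + 1))) (lam n)) +
            dist (H.W (y (n + 1)) (T (y (n + 1))) (lam n))
              (H.W (y (n + 1)) (T (y (n + 1))) (lam (n + 1))) := dist_triangle _ _ _
        _ ≤ dist (y n) (y (n + 1)) +
            |lam (n + 1) - lam n| * dist (y (n + 1)) (T (y (n + 1))) := by
            rw [s2, abs_sub_comm (lam n)]
            nlinarith [hl.1, hl.2, sT, s1]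
    have m1 : |beta (n + 1) - beta n| * dist u (x n) ≤
        |beta (n + 1) - beta n| * (2 * M) :=
      mul_le_mul_of_nonneg_left (hux n) (abs_nonneg _)
    have m2 : |lam (n + 1) - lam n| * dist (y (n + 1)) (T (y (n + 1))) ≤
        |lam (n + 1) - lam n| * (2 * M) :=
      mul_le_mul_of_nonneg_left (hyT (n + 1)) (abs_nonneg _)
    calc dist (x (n + 1)) (x (n + 2)) ≤ dist (y n) (y (n + 1)) +
          |lam (n + 1) - lam n| * dist (y (n + 1)) (T (y (n + 1))) := h2
      _ ≤ beta (n + 1) * dist (x n) (x (n + 1)) +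
          2 * M * (|beta (n + 1) - beta n| + |lam (n + 1) - lam n|) := by
        have := h1; linarith [m1, m2]
  -- iterated estimate
  have key : ∀ N n : ℕ, N ≤ n → dist (x n) (x (n + 1)) ≤
      (∏ i ∈ Finset.Ico N n, beta (i + 1)) * dist (x N) (x (N + 1)) +
        ∑ i ∈ Finset.Ico N n,
          2 * M * (|beta (i + 1) - beta i| + |lam (i + 1) - lam i|) := by
    intro N n hNn
    induction n, hNn using Nat.le_induction with
    | base => simp
    | succ n hNn ih =>
      rw [Finset.prod_Ico_succ_top hNn, Finset.sum_Ico_succ_top hNn]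
      have hb := hbeta (n + 1)
      have hP0 : 0 ≤ ∏ i ∈ Finset.Ico N n, beta (i + 1) :=
        Finset.prod_nonneg fun i _ => (hbeta (i + 1)).1
      have hS0 : 0 ≤ ∑ i ∈ Finset.Ico N n,
          2 * M * (|beta (i + 1) - beta i| + |lam (i + 1) - lam i|) :=
        Finset.sum_nonneg fun i _ => by positivity
      have hstep := hrec n
      have hmul : beta (n + 1) * dist (x n) (x (n + 1)) ≤
          beta (n + 1) * ((∏ i ∈ Finset.Ico N n, beta (i + 1)) * dist (x N) (x (N + 1)) +
            ∑ i ∈ Finset.Ico N n,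
              2 * M * (|beta (i + 1) - beta i| + |lam (i + 1) - lam i|)) :=
        mul_le_mul_of_nonneg_left ih hb.1
      have hd0 : 0 ≤ dist (x N) (x (N + 1)) := dist_nonneg
      nlinarith [hb.1, hb.2, hP0, hS0, hd0, mul_nonneg hP0 hd0]
  -- main argument
  intro k n hn
  have hpos : (0:ℝ) < 1 / ((k : ℝ) + 1) := by positivity
  by_cases hK0 : K = 0
  · have hMz : M = 0 := le_antisymm (by rw [hK0] at hK; exact_mod_cast hK) hM0
    have := haa n
    rw [hMz] at this
    linarith
  · have hK1 : 0 < K := Nat.pos_of_ne_zero hK0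
    have hKR : (0:ℝ) < K := by exact_mod_cast hK1
    have hψpos : (0:ℝ) < ψ₀ k := by exact_mod_cast hψ₀pos k
    have hkR : (0:ℝ) < (k : ℝ) + 1 := by positivity
    obtain ⟨q, rfl⟩ : ∃ q, n = χ (3 * k + 2) + q + 1 := by
      refine ⟨n - χ (3 * k + 2) - 1, ?_⟩
      have h := hSg k
      omega
    set m := χ (3 * k + 2) with hmdef
    have hNle : m + 1 ≤ m + q + 1 := by omega
    have hkey := key (m + 1) (m + q + 1) hNle
    -- product bound
    have hQpos : (0:ℝ) < ∏ i ∈ Finset.range (m + q + 1), beta (i + 1) :=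
      Finset.prod_pos fun i _ => hbpos _
    have hQNpos : (0:ℝ) < ∏ i ∈ Finset.range (m + 1), beta (i + 1) :=
      Finset.prod_pos fun i _ => hbpos _
    have hPpos : (0:ℝ) < ∏ i ∈ Finset.Ico (m + 1) (m + q + 1), beta (i + 1) :=
      Finset.prod_pos fun i _ => hbpos _
    have hcast6 : ((6 * K * (k + 1) * ψ₀ k - 1 : ℕ) : ℝ) + 1 =
        6 * (K : ℝ) * ((k : ℝ) + 1) * (ψ₀ k : ℝ) := by
      have h1 : 1 ≤ 6 * K * (k + 1) * ψ₀ k :=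
        Nat.one_le_iff_ne_zero.mpr (Nat.mul_ne_zero
          (Nat.mul_ne_zero (Nat.mul_ne_zero (by norm_num) hK0) (by omega))
          (Nat.pos_iff_ne_zero.mp (hψ₀pos k)))
      rw [Nat.cast_sub h1]
      push_cast
      ring
    have hQn : ∏ i ∈ Finset.range (m + q + 1), beta (i + 1) ≤
        1 / (6 * (K : ℝ) * ((k : ℝ) + 1) * (ψ₀ k : ℝ)) := by
      have hle : σ₂ (6 * K * (k + 1) * ψ₀ k - 1) ≤ m + q := by
        have h := hSg k
        omega
      have h := hσ₂ (6 * K * (k + 1) * ψ₀ k - 1) (m + q) hle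
      rw [abs_of_pos hQpos, hcast6] at h
      exact h
    have hsplit : (∏ i ∈ Finset.range (m + 1), beta (i + 1)) *
        ∏ i ∈ Finset.Ico (m + 1) (m + q + 1), beta (i + 1) =
        ∏ i ∈ Finset.range (m + q + 1), beta (i + 1) :=
      Finset.prod_range_mul_prod_Ico _ hNle
    have hψN : 1 / (ψ₀ k : ℝ) ≤ ∏ i ∈ Finset.range (m + 1), beta (i + 1) := hψ₀ k
    have hP : ∏ i ∈ Finset.Ico (m + 1) (m + q + 1), beta (i + 1) ≤
        1 / (6 * (K : ℝ) * ((k : ℝ) + 1)) := by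
      have h1 : 1 ≤ (ψ₀ k : ℝ) * ∏ i ∈ Finset.range (m + 1), beta (i + 1) := by
        rw [div_le_iff₀ hψpos] at hψN
        linarith [hψN]
      have h2 : ∏ i ∈ Finset.Ico (m + 1) (m + q + 1), beta (i + 1) ≤
          (ψ₀ k : ℝ) * ∏ i ∈ Finset.range (m + q + 1), beta (i + 1) := by
        nlinarith [mul_le_mul_of_nonneg_right h1 hPpos.le, hsplit]
      have h3 : (ψ₀ k : ℝ) * ∏ i ∈ Finset.range (m + q + 1), beta (i + 1) ≤
          (ψ₀ k : ℝ) * (1 / (6 * (K : ℝ) * ((k : ℝ) + 1) * (ψ₀ k : ℝ))) :=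
        mul_le_mul_of_nonneg_left hQn hψpos.le
      have h4 : (ψ₀ k : ℝ) * (1 / (6 * (K : ℝ) * ((k : ℝ) + 1) * (ψ₀ k : ℝ))) =
          1 / (6 * (K : ℝ) * ((k : ℝ) + 1)) := by
        field_simp
      linarith
    -- sum bounds
    have hcast8 : ((8 * K * (3 * k + 2 + 1) - 1 : ℕ) : ℝ) + 1 =
        8 * (K : ℝ) * (3 * (k : ℝ) + 3) := by
      have h1 : 1 ≤ 8 * K * (3 * k + 2 + 1) :=
        Nat.one_le_iff_ne_zero.mpr (Nat.mul_ne_zero (Nat.mul_ne_zero (by norm_num) hK0)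
          (by omega))
      rw [Nat.cast_sub h1]
      push_cast
      ring
    have hm3 : σ₃ (8 * K * (3 * k + 2 + 1) - 1) ≤ m := by
      rw [hmdef, hχ (3 * k + 2)]; exact le_max_left _ _
    have hm4 : σ₄ (8 * K * (3 * k + 2 + 1) - 1) ≤ m := by
      rw [hmdef, hχ (3 * k + 2)]; exact le_max_right _ _
    have hSβ : ∑ i ∈ Finset.Icc (m + 1) (m + q), |beta (i + 1) - beta i| ≤
        1 / (8 * (K : ℝ) * (3 * (k : ℝ) + 3)) := by
      have h := hσ₃ (8 * K * (3 * k + 2 + 1) - 1) m hm3 q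
      rw [hcast8] at h
      exact h
    have hSlam : ∑ i ∈ Finset.Icc (m + 1) (m + q), |lam (i + 1) - lam i| ≤
        1 / (8 * (K : ℝ) * (3 * (k : ℝ) + 3)) := by
      have h := hσ₄ (8 * K * (3 * k + 2 + 1) - 1) m hm4 q
      rw [hcast8] at h
      exact h
    have hIco : Finset.Ico (m + 1) (m + q + 1) = Finset.Icc (m + 1) (m + q) :=
      Finset.Ico_add_one_right_eq_Icc _ _
    have hsumsplit : ∑ i ∈ Finset.Icc (m + 1) (m + q),
        2 * M * (|beta (i + 1) - beta i| + |lam (i + 1) - lam i|) =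
        2 * M * (∑ i ∈ Finset.Icc (m + 1) (m + q), |beta (i + 1) - beta i|) +
        2 * M * (∑ i ∈ Finset.Icc (m + 1) (m + q), |lam (i + 1) - lam i|) := by
      simp only [mul_add, Finset.sum_add_distrib, Finset.mul_sum]
    have hSβ0 : 0 ≤ ∑ i ∈ Finset.Icc (m + 1) (m + q), |beta (i + 1) - beta i| :=
      Finset.sum_nonneg fun i _ => abs_nonneg _
    have hSlam0 : 0 ≤ ∑ i ∈ Finset.Icc (m + 1) (m + q), |lam (i + 1) - lam i| :=
      Finset.sum_nonneg fun i _ => abs_nonneg _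
    have hMK2 : 2 * M ≤ 2 * (K : ℝ) := by linarith
    have hB1 : 2 * M * (∑ i ∈ Finset.Icc (m + 1) (m + q), |beta (i + 1) - beta i|) ≤
        2 * (K : ℝ) * (1 / (8 * (K : ℝ) * (3 * (k : ℝ) + 3))) :=
      mul_le_mul hMK2 hSβ hSβ0 (by positivity)
    have hB2 : 2 * M * (∑ i ∈ Finset.Icc (m + 1) (m + q), |lam (i + 1) - lam i|) ≤
        2 * (K : ℝ) * (1 / (8 * (K : ℝ) * (3 * (k : ℝ) + 3))) :=
      mul_le_mul hMK2 hSlam hSlam0 (by positivity)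
    have hεval : 2 * (K : ℝ) * (1 / (8 * (K : ℝ) * (3 * (k : ℝ) + 3))) =
        1 / (12 * ((k : ℝ) + 1)) := by
      field_simp
      ring
    -- product term value
    have haN : dist (x (m + 1)) (x (m + 1 + 1)) ≤ 2 * (K : ℝ) :=
      le_trans (haa (m + 1)) hMK2
    have hA : (∏ i ∈ Finset.Ico (m + 1) (m + q + 1), beta (i + 1)) *
        dist (x (m + 1)) (x (m + 1 + 1)) ≤ 1 / (3 * ((k : ℝ) + 1)) := by
      have h1 : (∏ i ∈ Finset.Ico (m + 1) (m + q + 1), beta (i + 1)) *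
          dist (x (m + 1)) (x (m + 1 + 1)) ≤
          (1 / (6 * (K : ℝ) * ((k : ℝ) + 1))) * (2 * (K : ℝ)) :=
        mul_le_mul hP haN dist_nonneg (by positivity)
      have h2 : (1 / (6 * (K : ℝ) * ((k : ℝ) + 1))) * (2 * (K : ℝ)) =
          1 / (3 * ((k : ℝ) + 1)) := by
        field_simp
        ring
      linarith
    rw [hIco] at hkey hA hP
    rw [hsumsplit] at hkey
    have hfin : 1 / (3 * ((k : ℝ) + 1)) + 1 / (12 * ((k : ℝ) + 1)) +
        1 / (12 * ((k : ℝ) + 1)) ≤ 1 / ((k : ℝ) + 1) := by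
      have he : 1 / (3 * ((k : ℝ) + 1)) + 1 / (12 * ((k : ℝ) + 1)) +
          1 / (12 * ((k : ℝ) + 1)) = 1 / (2 * ((k : ℝ) + 1)) := by
        field_simp
        ring
      rw [he]
      have hle2 : (k : ℝ) + 1 ≤ 2 * ((k : ℝ) + 1) := by linarith
      exact one_div_le_one_div_of_le hkR hle2
    linarith [hkey, hA, hB1, hB2, hεval, hfin]
end

section
/- (Main theorem, T-asymptotic regularity under (C2_q)) In the Tikhonov-Mann setting, assume: β_n > 0 for all n; σ₂ : ℕ → ℕ is a rate of convergence towards 0 of P_n = ∏_{i=0}^{n} β_{i+1}; σ₃ is a Cauchy modulus for ∑ |β_{n+1}−β_n|; σ₄ is a Cauchy modulus for ∑ |λ_{n+1}−λ_n|; K ∈ ℕ satisfies K ≥ M; σ₅ : ℕ → ℕ is a rate of convergence of (β_n) towards 1; Λ ∈ ℕ, Λ ≥ 1, and N_Λ ∈ ℕ are such that λ_n ≥ 1/Λ for all n ≥ N_Λ. Define χ(k) = max{σ₃(8K(k+1)−1), σ₄(8K(k+1)−1)}, suppose ψ₀ : ℕ → ℕ takes positive values with 1/ψ₀(k) ≤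 P_{χ(3k+2)} for all k, and set Σ̃(k) = max{σ₂(6K(k+1)ψ₀(k)−1), χ(3k+2)+1} + 1. Then Φ̃(k) = max{N_Λ, Σ̃(2Λ(k+1)−1), σ₅(4KΛ(k+1)−1)} is a rate of T-asymptotic regularity for (x_n), i.e., d(x_n,Tx_n) ≤ 1/(k+1) for all k ∈ ℕ and all n ≥ Φ̃(k). -/
set_option maxHeartbeats 1000000 in
theorem tm_T_as_reg_C2q
    {X : Type*} [MetricSpace X] (H : WHyp X) (C : Set X)
    (hCconv : ∀ x ∈ C, ∀ y ∈ C, ∀ l ∈ Set.Icc (0:ℝ) 1, H.W x y l ∈ C)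
    (T : X → X) (hTmaps : ∀ x ∈ C, T x ∈ C)
    (hTne : ∀ x ∈ C, ∀ y ∈ C, dist (T x) (T y) ≤ dist x y)
    (p : X) (hpC : p ∈ C) (hpfix : T p = p)
    (u : X) (huC : u ∈ C)
    (lam beta : ℕ → ℝ)
    (hlam : ∀ n, lam n ∈ Set.Icc (0:ℝ) 1) (hbeta : ∀ n, beta n ∈ Set.Icc (0:ℝ) 1)
    (x y : ℕ → X) (hx0 : x 0 ∈ C)
    (hy : ∀ n, y n = H.W u (x n) (beta n))
    (hx : ∀ n, x (n + 1) = H.W (y n) (T (y n)) (lam n))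
    (M : ℝ) (hM : M = max (dist (x 0) p) (dist u p))
    (hbpos : ∀ n, 0 < beta n)
    (σ₂ σ₃ σ₄ σ₅ : ℕ → ℕ)
    (hσ₂ : ∀ k : ℕ, ∀ n ≥ σ₂ k,
      |∏ i ∈ Finset.range (n + 1), beta (i + 1)| ≤ 1 / (k + 1))
    (hσ₃ : ∀ k : ℕ, ∀ n ≥ σ₃ k, ∀ q : ℕ,
      ∑ i ∈ Finset.Icc (n + 1) (n + q), |beta (i + 1) - beta i| ≤ 1 / (k + 1))
    (hσ₄ : ∀ k : ℕ, ∀ n ≥ σ₄ k, ∀ q : ℕ,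
      ∑ i ∈ Finset.Icc (n + 1) (n + q), |lam (i + 1) - lam i| ≤ 1 / (k + 1))
    (K : ℕ) (hK : M ≤ (K : ℝ))
    (hσ₅ : ∀ k : ℕ, ∀ n ≥ σ₅ k, |beta n - 1| ≤ 1 / (k + 1))
    (Λ : ℕ) (hΛ : 1 ≤ Λ) (NΛ : ℕ)
    (hNΛ : ∀ n ≥ NΛ, 1 / (Λ : ℝ) ≤ lam n)
    (χ : ℕ → ℕ)
    (hχ : ∀ k : ℕ, χ k = max (σ₃ (8 * K * (k + 1) - 1)) (σ₄ (8 * K * (k + 1) - 1)))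
    (ψ₀ : ℕ → ℕ) (hψ₀pos : ∀ k, 0 < ψ₀ k)
    (hψ₀ : ∀ k : ℕ, 1 / (ψ₀ k : ℝ) ≤ ∏ i ∈ Finset.range (χ (3 * k + 2) + 1), beta (i + 1))
    (Sg : ℕ → ℕ)
    (hSg : ∀ k : ℕ,
      Sg k = max (σ₂ (6 * K * (k + 1) * ψ₀ k - 1)) (χ (3 * k + 2) + 1) + 1)
    (Φ : ℕ → ℕ)
    (hΦ : ∀ k : ℕ,
      Φ k = max NΛ (max (Sg (2 * Λ * (k + 1) - 1)) (σ₅ (4 * K * Λ * (k + 1) - 1)))) :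
    ∀ k : ℕ, ∀ n ≥ Φ k, dist (x n) (T (x n)) ≤ 1 / (k + 1) := by
  classical
  have mem0 : (0:ℝ) ∈ Set.Icc (0:ℝ) 1 := by constructor <;> norm_num
  have mem1 : (1:ℝ) ∈ Set.Icc (0:ℝ) 1 := by constructor <;> norm_num
  -- basic facts about W
  have wzero : ∀ a b : X, H.W a b 0 = a := by
    intro a b
    have h := H.W1 a b a 0 mem0
    simp only [dist_self, sub_zero, one_mul, zero_mul, mul_zero, add_zero, zero_add] at h
    have h2 : dist a (H.W a b 0) ≤ 0 := by linarith
    exact (dist_le_zero.mp h2).symm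
  have wone : ∀ a b : X, H.W a b 1 = b := by
    intro a b
    have h := H.W3 a b 1 mem1
    rw [h]; norm_num [wzero]
  have dWright : ∀ a b : X, ∀ l ∈ Set.Icc (0:ℝ) 1,
      dist (H.W a b l) b = (1 - l) * dist a b := by
    intro a b l hl
    have h := H.W2 a b l hl 1 mem1
    rw [wone] at h
    rw [h, abs_sub_comm, abs_of_nonneg (by linarith [hl.2] : (0:ℝ) ≤ 1 - l)]
  have dWleft : ∀ a b : X, ∀ l ∈ Set.Icc (0:ℝ) 1,
      dist a (H.W a b l) = l * dist a b := by
    intro a b l hl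
    have h := H.W2 a b l hl 0 mem0
    rw [wzero] at h
    rw [dist_comm] at h
    rw [h, sub_zero, abs_of_nonneg hl.1]
  -- K = 0 case
  rcases Nat.eq_zero_or_pos K with hK0 | hK1
  · -- trivial case: everything equals p
    have hM0 : M ≤ 0 := by rw [hK0] at hK; simpa using hK
    have hx0p : x 0 = p := by
      have h1 : dist (x 0) p ≤ M := by rw [hM]; exact le_max_left _ _
      exact dist_le_zero.mp (h1.trans hM0)
    have hup : u = p := by
      have h1 : dist u p ≤ M := by rw [hM]; exact le_max_right _ _
      exact dist_le_zero.mp (h1.trans hM0)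
    have wpp : ∀ l ∈ Set.Icc (0:ℝ) 1, H.W p p l = p := by
      intro l hl
      have h := H.W1 p p p l hl
      simp only [dist_self, mul_zero, add_zero] at h
      exact (dist_le_zero.mp h).symm
    have hall : ∀ n, x n = p := by
      intro n
      induction n with
      | zero => exact hx0p
      | succ n ih =>
        have hyn : y n = p := by rw [hy n, ih, hup, wpp _ (hbeta n)]
        rw [hx n, hyn, hpfix, wpp _ (hlam n)]
    intro k n _
    rw [hall n, hpfix]
    simp only [dist_self]
    positivity
  · -- main case : K ≥ 1
    have hKR : (1:ℝ) ≤ (K:ℝ) := by exact_mod_cast hK1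
    have hΛR : (1:ℝ) ≤ (Λ:ℝ) := by exact_mod_cast hΛ
    have hc : ∀ a : ℕ, 0 < a → ((a - 1 : ℕ) : ℝ) + 1 = (a : ℝ) := by
      intro a ha
      rw [Nat.cast_sub ha]
      push_cast
      ring
    have hMnn : 0 ≤ M := by rw [hM]; exact le_max_of_le_left dist_nonneg
    -- membership in C
    have hxC : ∀ n, x n ∈ C := by
      intro n
      induction n with
      | zero => exact hx0
      | succ n ih =>
        have hyn : y n ∈ C := by rw [hy n]; exact hCconv u huC _ ih _ (hbeta n)
        rw [hx n]; exact hCconv _ hyn _ (hTmaps _ hyn) _ (hlam n)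
    have hyC : ∀ n, y n ∈ C := by
      intro n; rw [hy n]; exact hCconv u huC _ (hxC n) _ (hbeta n)
    -- boundedness
    have hxp : ∀ n, dist (x n) p ≤ M := by
      intro n
      induction n with
      | zero => rw [hM]; exact le_max_left _ _
      | succ n ih =>
        have hyp : dist (y n) p ≤ M := by
          rw [hy n, dist_comm]
          have h := H.W1 u (x n) p (beta n) (hbeta n)
          have hup : dist p u ≤ M := by rw [hM, dist_comm]; exact le_max_right _ _
          have hb := hbeta n
          rw [dist_comm p (x n)] at h
          nlinarith [hb.1, hb.2, h, ih, hup]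
        rw [hx n, dist_comm]
        have h := H.W1 (y n) (T (y n)) p (lam n) (hlam n)
        have hTp : dist p (T (y n)) ≤ dist (y n) p := by
          calc dist p (T (y n)) = dist (T p) (T (y n)) := by rw [hpfix]
            _ ≤ dist p (y n) := hTne p hpC (y n) (hyC n)
            _ = dist (y n) p := dist_comm _ _
        have hl := hlam n
        rw [dist_comm p (y n)] at h
        nlinarith [hl.1, hl.2, h, hTp, hyp]
    have hyp : ∀ n, dist (y n) p ≤ M := by
      intro n
      rw [hy n, dist_comm]
      have h := H.W1 u (x n) p (beta n) (hbeta n)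
      have hup : dist p u ≤ M := by rw [hM, dist_comm]; exact le_max_right _ _
      have hb := hbeta n
      rw [dist_comm p (x n)] at h
      nlinarith [hb.1, hb.2, h, hxp n, hup]
    have dxu : ∀ n, dist u (x n) ≤ 2 * (K:ℝ) := by
      intro n
      calc dist u (x n) ≤ dist u p + dist p (x n) := dist_triangle _ _ _
        _ = dist u p + dist (x n) p := by rw [dist_comm p (x n)]
        _ ≤ M + M := by
            have := hxp n
            have h2 : dist u p ≤ M := by rw [hM]; exact le_max_right _ _
            linarith
        _ ≤ 2 * (K:ℝ) := by linarith [hK]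
    have dyT : ∀ n, dist (y n) (T (y n)) ≤ 2 * (K:ℝ) := by
      intro n
      have hTp : dist p (T (y n)) ≤ dist (y n) p := by
        calc dist p (T (y n)) = dist (T p) (T (y n)) := by rw [hpfix]
          _ ≤ dist p (y n) := hTne p hpC (y n) (hyC n)
          _ = dist (y n) p := dist_comm _ _
      calc dist (y n) (T (y n)) ≤ dist (y n) p + dist p (T (y n)) := dist_triangle _ _ _
        _ ≤ M + M := by linarith [hyp n, hTp]
        _ ≤ 2 * (K:ℝ) := by linarith [hK]
    have dxx : ∀ n, dist (x (n+1)) (x n) ≤ 2 * (K:ℝ) := by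
      intro n
      calc dist (x (n+1)) (x n) ≤ dist (x (n+1)) p + dist p (x n) := dist_triangle _ _ _
        _ = dist (x (n+1)) p + dist (x n) p := by rw [dist_comm p (x n)]
        _ ≤ M + M := by linarith [hxp (n+1), hxp n]
        _ ≤ 2 * (K:ℝ) := by linarith [hK]
    have dxy : ∀ n, dist (x n) (y n) = (1 - beta n) * dist u (x n) := by
      intro n
      rw [hy n, dist_comm]
      exact dWright u (x n) (beta n) (hbeta n)
    -- key recurrence
    have key : ∀ n, dist (x (n+2)) (x (n+1)) ≤ beta (n+1) * dist (x (n+1)) (x n) +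
        2 * (K:ℝ) * (|beta (n+1) - beta n| + |lam (n+1) - lam n|) := by
      intro n
      have hyy : dist (y (n+1)) (y n) ≤ beta (n+1) * dist (x (n+1)) (x n) +
          |beta (n+1) - beta n| * dist u (x n) := by
        rw [hy (n+1), hy n]
        have tri := dist_triangle (H.W u (x (n+1)) (beta (n+1))) (H.W u (x n) (beta (n+1)))
          (H.W u (x n) (beta n))
        have t1 := H.W4 u u (x (n+1)) (x n) (beta (n+1)) (hbeta (n+1))
        have t2 := H.W2 u (x n) (beta (n+1)) (hbeta (n+1)) (beta n) (hbeta n)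
        rw [dist_self] at t1
        linarith [tri, t1, t2.le]
      have tri := dist_triangle (H.W (y (n+1)) (T (y (n+1))) (lam (n+1)))
        (H.W (y n) (T (y n)) (lam (n+1))) (H.W (y n) (T (y n)) (lam n))
      have t1 := H.W4 (y (n+1)) (y n) (T (y (n+1))) (T (y n)) (lam (n+1)) (hlam (n+1))
      have t2 := H.W2 (y n) (T (y n)) (lam (n+1)) (hlam (n+1)) (lam n) (hlam n)
      have t3 := hTne (y (n+1)) (hyC (n+1)) (y n) (hyC n)
      have hl := hlam (n+1)
      have h4 : |beta (n+1) - beta n| * dist u (x n) ≤ |beta (n+1) - beta n| * (2*(K:ℝ)) :=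
        mul_le_mul_of_nonneg_left (dxu n) (abs_nonneg _)
      have h5 : |lam (n+1) - lam n| * dist (y n) (T (y n)) ≤ |lam (n+1) - lam n| * (2*(K:ℝ)) :=
        mul_le_mul_of_nonneg_left (dyT n) (abs_nonneg _)
      have h6 : lam (n+1) * dist (T (y (n+1))) (T (y n)) ≤ lam (n+1) * dist (y (n+1)) (y n) :=
        mul_le_mul_of_nonneg_left t3 hl.1
      conv_lhs => rw [hx (n+1), hx n]
      nlinarith [tri, t1, t2.le, h4, h5, h6, hyy, hl.1, hl.2, (dist_nonneg : (0:ℝ) ≤ dist (y (n+1)) (y n))]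
    -- unrolled recurrence
    have unroll : ∀ m n : ℕ, m ≤ n →
        dist (x (n+1)) (x n) ≤ (∏ i ∈ Finset.Ico m n, beta (i+1)) * dist (x (m+1)) (x m) +
          ∑ i ∈ Finset.Ico m n, 2 * (K:ℝ) * (|beta (i+1) - beta i| + |lam (i+1) - lam i|) := by
      intro m n hmn
      induction n, hmn using Nat.le_induction with
      | base => simp
      | succ n hmn ih =>
        have hk := key n
        rw [Finset.prod_Ico_succ_top hmn, Finset.sum_Ico_succ_top hmn]
        have hb := hbeta (n+1)
        have hP : 0 ≤ ∏ i ∈ Finset.Ico m n, beta (i+1) :=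
          Finset.prod_nonneg fun i _ => (hbeta (i+1)).1
        have hS : 0 ≤ ∑ i ∈ Finset.Ico m n, 2 * (K:ℝ) * (|beta (i+1) - beta i| + |lam (i+1) - lam i|) :=
          Finset.sum_nonneg fun i _ => by positivity
        have h1 : beta (n+1) * dist (x (n+1)) (x n) ≤ beta (n+1) *
            ((∏ i ∈ Finset.Ico m n, beta (i+1)) * dist (x (m+1)) (x m) +
              ∑ i ∈ Finset.Ico m n, 2 * (K:ℝ) * (|beta (i+1) - beta i| + |lam (i+1) - lam i|)) :=
          mul_le_mul_of_nonneg_left ih hb.1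
        nlinarith [hk, h1, hb.1, hb.2, hP, hS, (dist_nonneg : (0:ℝ) ≤ dist (x (m+1)) (x m))]
    -- asymptotic regularity with rate Sg
    have areg : ∀ k n : ℕ, Sg k ≤ n → dist (x (n+1)) (x n) ≤ 1 / ((k:ℝ)+1) := by
      intro k n hn
      have ckpos : (0:ℝ) < (k:ℝ) + 1 := by positivity
      have hn' := hn
      rw [hSg k] at hn'
      have hn1 : σ₂ (6*K*(k+1)*ψ₀ k - 1) + 1 ≤ n := by omega
      have hn2 : χ (3*k+2) + 2 ≤ n := by omega
      set χ₀ := χ (3*k+2) with hχ₀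
      set m := χ₀ + 1 with hm
      have hmn : m ≤ n := by omega
      -- product bound
      have hψpos : (0:ℝ) < (ψ₀ k : ℝ) := by exact_mod_cast hψ₀pos k
      have hPm : (0:ℝ) < ∏ i ∈ Finset.range m, beta (i+1) :=
        Finset.prod_pos fun i _ => hbpos (i+1)
      have hPmge : 1 / (ψ₀ k : ℝ) ≤ ∏ i ∈ Finset.range m, beta (i+1) := hψ₀ k
      have hcast1 : ((6*K*(k+1)*ψ₀ k - 1 : ℕ) : ℝ) + 1 = 6*(K:ℝ)*((k:ℝ)+1)*(ψ₀ k : ℝ) := by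
        rw [hc _ (Nat.mul_pos (Nat.mul_pos (Nat.mul_pos (by norm_num) hK1) (Nat.succ_pos k)) (hψ₀pos k))]
        push_cast; ring
      have hPn : ∏ i ∈ Finset.range n, beta (i+1) ≤ 1 / (6*(K:ℝ)*((k:ℝ)+1)*(ψ₀ k : ℝ)) := by
        have h := hσ₂ (6*K*(k+1)*ψ₀ k - 1) (n-1) (by omega)
        rw [show n - 1 + 1 = n by omega] at h
        rw [abs_of_nonneg (Finset.prod_nonneg fun i _ => (hbeta (i+1)).1)] at h
        rw [hcast1] at h
        exact h
      have hsplit : (∏ i ∈ Finset.range m, beta (i+1)) * ∏ i ∈ Finset.Ico m n, beta (i+1) =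
          ∏ i ∈ Finset.range n, beta (i+1) := by
        simp only [Finset.range_eq_Ico]
        exact Finset.prod_Ico_consecutive _ (Nat.zero_le m) hmn
      have hPIco : ∏ i ∈ Finset.Ico m n, beta (i+1) ≤ 1 / (6*(K:ℝ)*((k:ℝ)+1)) := by
        have hKck : (0:ℝ) < 6*(K:ℝ)*((k:ℝ)+1) := by positivity
        refine le_of_mul_le_mul_right ?_ hPm
        rw [mul_comm, hsplit]
        calc ∏ i ∈ Finset.range n, beta (i+1) ≤ 1 / (6*(K:ℝ)*((k:ℝ)+1)*(ψ₀ k : ℝ)) := hPn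
          _ = (1 / (6*(K:ℝ)*((k:ℝ)+1))) * (1 / (ψ₀ k : ℝ)) := by
              rw [div_mul_div_comm, one_mul]
          _ ≤ (1 / (6*(K:ℝ)*((k:ℝ)+1))) * ∏ i ∈ Finset.range m, beta (i+1) :=
              mul_le_mul_of_nonneg_left hPmge (by positivity)
      -- sum bound
      have hχval := hχ (3*k+2)
      have hIcoIcc : Finset.Ico m n = Finset.Icc (χ₀+1) (χ₀ + (n-1-χ₀)) := by
        rw [show n = (n-1)+1 by omega, Finset.Ico_add_one_right_eq_Icc]
        congr 1
        omega
      have hcast2 : ((8*K*(3*k+2+1) - 1 : ℕ) : ℝ) + 1 = 24*(K:ℝ)*((k:ℝ)+1) := by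
        rw [hc _ (Nat.mul_pos (Nat.mul_pos (by norm_num) hK1) (by omega))]
        push_cast; ring
      have hsb : ∑ i ∈ Finset.Ico m n, |beta (i+1) - beta i| ≤ 1 / (24*(K:ℝ)*((k:ℝ)+1)) := by
        have h := hσ₃ (8*K*(3*k+2+1) - 1) χ₀ (by omega) (n-1-χ₀)
        rw [hcast2] at h
        rw [hIcoIcc]
        exact h
      have hsl : ∑ i ∈ Finset.Ico m n, |lam (i+1) - lam i| ≤ 1 / (24*(K:ℝ)*((k:ℝ)+1)) := by
        have h := hσ₄ (8*K*(3*k+2+1) - 1) χ₀ (by omega) (n-1-χ₀)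
        rw [hcast2] at h
        rw [hIcoIcc]
        exact h
      have hsum : ∑ i ∈ Finset.Ico m n, 2 * (K:ℝ) * (|beta (i+1) - beta i| + |lam (i+1) - lam i|)
          ≤ 1 / (6*((k:ℝ)+1)) := by
        have heq : ∑ i ∈ Finset.Ico m n, 2 * (K:ℝ) * (|beta (i+1) - beta i| + |lam (i+1) - lam i|)
            = 2 * (K:ℝ) * ((∑ i ∈ Finset.Ico m n, |beta (i+1) - beta i|) +
              ∑ i ∈ Finset.Ico m n, |lam (i+1) - lam i|) := by
          rw [← Finset.sum_add_distrib, Finset.mul_sum]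
        rw [heq]
        have h2 : 2 * (K:ℝ) * ((1 / (24*(K:ℝ)*((k:ℝ)+1))) + 1 / (24*(K:ℝ)*((k:ℝ)+1)))
            = 1 / (6*((k:ℝ)+1)) := by
          field_simp
          ring
        calc 2 * (K:ℝ) * ((∑ i ∈ Finset.Ico m n, |beta (i+1) - beta i|) +
              ∑ i ∈ Finset.Ico m n, |lam (i+1) - lam i|)
            ≤ 2 * (K:ℝ) * ((1 / (24*(K:ℝ)*((k:ℝ)+1))) + 1 / (24*(K:ℝ)*((k:ℝ)+1))) :=
              mul_le_mul_of_nonneg_left (add_le_add hsb hsl) (by positivity)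
          _ = 1 / (6*((k:ℝ)+1)) := h2
      -- combine
      have hmain := unroll m n hmn
      have hprodterm : (∏ i ∈ Finset.Ico m n, beta (i+1)) * dist (x (m+1)) (x m)
          ≤ 1 / (3*((k:ℝ)+1)) := by
        have hP : 0 ≤ ∏ i ∈ Finset.Ico m n, beta (i+1) :=
          Finset.prod_nonneg fun i _ => (hbeta (i+1)).1
        calc (∏ i ∈ Finset.Ico m n, beta (i+1)) * dist (x (m+1)) (x m)
            ≤ (1 / (6*(K:ℝ)*((k:ℝ)+1))) * (2*(K:ℝ)) :=
              mul_le_mul hPIco (dxx m) dist_nonneg (by positivity)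
          _ = 1 / (3*((k:ℝ)+1)) := by field_simp; ring
      have hfin : 1 / (3*((k:ℝ)+1)) + 1 / (6*((k:ℝ)+1)) ≤ 1 / ((k:ℝ)+1) := by
        rw [div_add_div _ _ (by positivity) (by positivity), div_le_div_iff₀ (by positivity) ckpos]
        ring_nf
        nlinarith [ckpos]
      linarith [hmain, hprodterm, hsum]
    -- final argument
    intro k n hn
    have ckpos : (0:ℝ) < (k:ℝ) + 1 := by positivity
    rw [hΦ k] at hn
    have hn1 : NΛ ≤ n := le_trans le_sup_left hn
    have hn2 : Sg (2*Λ*(k+1) - 1) ≤ n := le_trans (le_trans le_sup_left le_sup_right) hn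
    have hn3 : σ₅ (4*K*Λ*(k+1) - 1) ≤ n := le_trans (le_trans le_sup_right le_sup_right) hn
    -- bound on dist (x (n+1)) (x n)
    have hcast3 : ((2*Λ*(k+1) - 1 : ℕ) : ℝ) + 1 = 2*(Λ:ℝ)*((k:ℝ)+1) := by
      rw [hc _ (Nat.mul_pos (Nat.mul_pos (by norm_num) hΛ) (Nat.succ_pos k))]
      push_cast; ring
    have haa : dist (x (n+1)) (x n) ≤ 1 / (2*(Λ:ℝ)*((k:ℝ)+1)) := by
      have h := areg (2*Λ*(k+1) - 1) n hn2
      rw [hcast3] at h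
      exact h
    -- bound on dist (x n) (y n)
    have hcast4 : ((4*K*Λ*(k+1) - 1 : ℕ) : ℝ) + 1 = 4*(K:ℝ)*(Λ:ℝ)*((k:ℝ)+1) := by
      rw [hc _ (Nat.mul_pos (Nat.mul_pos (Nat.mul_pos (by norm_num) hK1) hΛ) (Nat.succ_pos k))]
      push_cast; ring
    have hb5 : |beta n - 1| ≤ 1 / (4*(K:ℝ)*(Λ:ℝ)*((k:ℝ)+1)) := by
      have h := hσ₅ (4*K*Λ*(k+1) - 1) n hn3
      rw [hcast4] at h
      exact h
    have hxyb : dist (x n) (y n) ≤ 1 / (2*(Λ:ℝ)*((k:ℝ)+1)) := by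
      rw [dxy n]
      have hb := hbeta n
      have h1 : 1 - beta n ≤ |beta n - 1| := by
        rw [abs_sub_comm, abs_of_nonneg (by linarith [hb.2])]
      calc (1 - beta n) * dist u (x n) ≤ |beta n - 1| * (2*(K:ℝ)) := by
            apply mul_le_mul h1 (dxu n) dist_nonneg (abs_nonneg _)
        _ ≤ (1 / (4*(K:ℝ)*(Λ:ℝ)*((k:ℝ)+1))) * (2*(K:ℝ)) := by
            apply mul_le_mul_of_nonneg_right hb5 (by positivity)
        _ = 1 / (2*(Λ:ℝ)*((k:ℝ)+1)) := by field_simp; ring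
    -- the key inequality lam n * D ≤ a + d
    have hlamb := hNΛ n hn1
    have hl := hlam n
    have e1 : dist (x n) (T (x n)) ≤ dist (x n) (x (n+1)) + dist (x (n+1)) (T (x n)) :=
      dist_triangle _ _ _
    have e2 : dist (x (n+1)) (T (x n)) ≤ (1 - lam n) * dist (T (x n)) (y n) +
        lam n * dist (T (x n)) (T (y n)) := by
      rw [hx n, dist_comm]
      exact H.W1 (y n) (T (y n)) (T (x n)) (lam n) (hlam n)
    have e3 : dist (T (x n)) (y n) ≤ dist (x n) (T (x n)) + dist (x n) (y n) := by
      rw [dist_comm (T (x n)) (y n)]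
      calc dist (y n) (T (x n)) ≤ dist (y n) (x n) + dist (x n) (T (x n)) := dist_triangle _ _ _
        _ = dist (x n) (y n) + dist (x n) (T (x n)) := by rw [dist_comm (y n) (x n)]
        _ = dist (x n) (T (x n)) + dist (x n) (y n) := by ring
    have e4 : dist (T (x n)) (T (y n)) ≤ dist (x n) (y n) := hTne _ (hxC n) _ (hyC n)
    have e5 : dist (x n) (x (n+1)) = dist (x (n+1)) (x n) := dist_comm _ _
    have hineq : lam n * dist (x n) (T (x n)) ≤ dist (x (n+1)) (x n) + dist (x n) (y n) := by
      nlinarith [e1, e2, e3, e4, e5, hl.1, hl.2,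
        mul_le_mul_of_nonneg_left e3 (by linarith [hl.2] : (0:ℝ) ≤ 1 - lam n),
        mul_le_mul_of_nonneg_left e4 hl.1]
    have hΛpos : (0:ℝ) < (Λ:ℝ) := by linarith
    have h6 : (1/(Λ:ℝ)) * dist (x n) (T (x n)) ≤ 1 / ((Λ:ℝ)*((k:ℝ)+1)) := by
      have h5 : (1/(Λ:ℝ)) * dist (x n) (T (x n)) ≤ lam n * dist (x n) (T (x n)) :=
        mul_le_mul_of_nonneg_right hlamb dist_nonneg
      have hsumeq : (1:ℝ)/(2*(Λ:ℝ)*((k:ℝ)+1)) + 1/(2*(Λ:ℝ)*((k:ℝ)+1)) = 1/((Λ:ℝ)*((k:ℝ)+1)) := by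
        field_simp
        ring
      calc (1/(Λ:ℝ)) * dist (x n) (T (x n)) ≤ lam n * dist (x n) (T (x n)) := h5
        _ ≤ dist (x (n+1)) (x n) + dist (x n) (y n) := hineq
        _ ≤ 1/(2*(Λ:ℝ)*((k:ℝ)+1)) + 1/(2*(Λ:ℝ)*((k:ℝ)+1)) := add_le_add haa hxyb
        _ = 1/((Λ:ℝ)*((k:ℝ)+1)) := hsumeq
    have h8 := mul_le_mul_of_nonneg_left h6 hΛpos.le
    have h9 : (Λ:ℝ) * ((1/(Λ:ℝ)) * dist (x n) (T (x n))) = dist (x n) (T (x n)) := by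
      field_simp
    have h10 : (Λ:ℝ) * (1 / ((Λ:ℝ)*((k:ℝ)+1))) = 1/((k:ℝ)+1) := by
      field_simp
    rw [h9, h10] at h8
    exact h8
end

section
/- (Quadratic rate of asymptotic regularity) In the Tikhonov-Mann setting, let λ ∈ (0,1] and take λ_n = λ and β_n = 1 − 1/(n+1) for every n ∈ ℕ, and let K ∈ ℕ satisfy K ≥ M. Then Σ₀(k) = 144K²(k+1)² + 6K(k+1) is a rate of asymptotic regularity for (x_n), i.e., d(x_n,x_{n+1}) ≤ 1/(k+1) for all k ∈ ℕ and all n ≥ Σ₀(k). -/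
set_option maxHeartbeats 2000000 in
theorem tm_quadratic_as_reg
    {X : Type*} [MetricSpace X] (H : WHyp X) (C : Set X)
    (hCconv : ∀ x ∈ C, ∀ y ∈ C, ∀ l ∈ Set.Icc (0:ℝ) 1, H.W x y l ∈ C)
    (T : X → X) (hTmaps : ∀ x ∈ C, T x ∈ C)
    (hTne : ∀ x ∈ C, ∀ y ∈ C, dist (T x) (T y) ≤ dist x y)
    (p : X) (hpC : p ∈ C) (hpfix : T p = p)
    (u : X) (huC : u ∈ C)
    (lam beta : ℕ → ℝ)
    (hlam : ∀ n, lam n ∈ Set.Icc (0:ℝ) 1) (hbeta : ∀ n, beta n ∈ Set.Icc (0:ℝ) 1)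
    (x y : ℕ → X) (hx0 : x 0 ∈ C)
    (hy : ∀ n, y n = H.W u (x n) (beta n))
    (hx : ∀ n, x (n + 1) = H.W (y n) (T (y n)) (lam n))
    (M : ℝ) (hM : M = max (dist (x 0) p) (dist u p))
    (l : ℝ) (hl : l ∈ Set.Ioc (0:ℝ) 1)
    (hlamconst : ∀ n, lam n = l)
    (hbetaval : ∀ n : ℕ, beta n = 1 - 1 / (n + 1))
    (K : ℕ) (hK : M ≤ (K : ℝ)) :
    ∀ k : ℕ, ∀ n ≥ 144 * K ^ 2 * (k + 1) ^ 2 + 6 * K * (k + 1),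
      dist (x n) (x (n + 1)) ≤ 1 / (k + 1) := by
  have hM0 : 0 ≤ M := by
    rw [hM]; exact le_trans dist_nonneg (le_max_left _ _)
  have hlI : l ∈ Set.Icc (0:ℝ) 1 := ⟨hl.1.le, hl.2⟩
  have hup : dist u p ≤ M := by rw [hM]; exact le_max_right _ _
  -- membership
  have hxC : ∀ n, x n ∈ C := by
    intro n
    induction n with
    | zero => exact hx0
    | succ m ih =>
      have hymC : y m ∈ C := by
        rw [hy m]; exact hCconv u huC (x m) ih (beta m) (hbeta m)
      rw [hx m]
      exact hCconv (y m) hymC (T (y m)) (hTmaps _ hymC) (lam m) (hlam m)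
  have hyC : ∀ n, y n ∈ C := by
    intro n; rw [hy n]; exact hCconv u huC (x n) (hxC n) (beta n) (hbeta n)
  -- boundedness
  have hxb : ∀ n, dist (x n) p ≤ M := by
    intro n
    induction n with
    | zero => rw [hM]; exact le_max_left _ _
    | succ m ih =>
      have hyb : dist (y m) p ≤ M := by
        rw [hy m, dist_comm]
        have h1 := (hbeta m).1
        have h2 := (hbeta m).2
        have e0 := H.W1 u (x m) p (beta m) (hbeta m)
        have e1 : (1 - beta m) * dist p u ≤ (1 - beta m) * M :=
          mul_le_mul_of_nonneg_left (by rw [dist_comm]; exact hup) (by linarith)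
        have e2 : beta m * dist p (x m) ≤ beta m * M :=
          mul_le_mul_of_nonneg_left (by rw [dist_comm]; exact ih) h1
        linarith
      have hT : dist p (T (y m)) ≤ M := by
        rw [dist_comm]
        calc dist (T (y m)) p = dist (T (y m)) (T p) := by rw [hpfix]
          _ ≤ dist (y m) p := hTne (y m) (hyC m) p hpC
          _ ≤ M := hyb
      rw [hx m, dist_comm]
      have h1 := (hlam m).1
      have h2 := (hlam m).2
      have e0 := H.W1 (y m) (T (y m)) p (lam m) (hlam m)
      have e1 : (1 - lam m) * dist p (y m) ≤ (1 - lam m) * M :=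
        mul_le_mul_of_nonneg_left (by rw [dist_comm]; exact hyb) (by linarith)
      have e2 : lam m * dist p (T (y m)) ≤ lam m * M :=
        mul_le_mul_of_nonneg_left hT h1
      linarith
  have hxbu : ∀ n, dist u (x n) ≤ 2 * M := by
    intro n
    calc dist u (x n) ≤ dist u p + dist p (x n) := dist_triangle _ _ _
      _ ≤ M + M := add_le_add hup (by rw [dist_comm]; exact hxb n)
      _ = 2 * M := by ring
  -- the recurrence
  have hrec : ∀ n : ℕ, ((n:ℝ) + 1) * dist (x (n+1)) (x (n+2)) ≤
      (n:ℝ) * dist (x n) (x (n+1)) + 2 * M / ((n:ℝ) + 2) := by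
    intro n
    have hstep1 : dist (x (n+1)) (x (n+2)) ≤ dist (y n) (y (n+1)) := by
      rw [show n + 2 = (n+1) + 1 from rfl, hx n, hx (n+1), hlamconst n, hlamconst (n+1)]
      have e0 := H.W4 (y n) (y (n+1)) (T (y n)) (T (y (n+1))) l hlI
      have e1 : dist (T (y n)) (T (y (n+1))) ≤ dist (y n) (y (n+1)) :=
        hTne (y n) (hyC n) (y (n+1)) (hyC (n+1))
      have e2 : l * dist (T (y n)) (T (y (n+1))) ≤ l * dist (y n) (y (n+1)) :=
        mul_le_mul_of_nonneg_left e1 hl.1.le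
      nlinarith [(dist_nonneg : (0:ℝ) ≤ dist (y n) (y (n+1)))]
    have hstep2 : dist (y n) (y (n+1)) ≤ beta n * dist (x n) (x (n+1)) +
        |beta n - beta (n+1)| * dist u (x (n+1)) := by
      rw [hy n, hy (n+1)]
      calc dist (H.W u (x n) (beta n)) (H.W u (x (n+1)) (beta (n+1)))
          ≤ dist (H.W u (x n) (beta n)) (H.W u (x (n+1)) (beta n))
            + dist (H.W u (x (n+1)) (beta n)) (H.W u (x (n+1)) (beta (n+1))) :=
            dist_triangle _ _ _
        _ ≤ ((1 - beta n) * dist u u + beta n * dist (x n) (x (n+1)))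
            + |beta n - beta (n+1)| * dist u (x (n+1)) :=
            add_le_add (H.W4 u u (x n) (x (n+1)) (beta n) (hbeta n))
              (le_of_eq (H.W2 u (x (n+1)) (beta n) (hbeta n) (beta (n+1)) (hbeta (n+1))))
        _ = beta n * dist (x n) (x (n+1)) + |beta n - beta (n+1)| * dist u (x (n+1)) := by
            rw [dist_self]; ring
    have habs : |beta n - beta (n+1)| = 1 / (((n:ℝ) + 1) * ((n:ℝ) + 2)) := by
      have hb1 : beta n - beta (n+1) = -(1 / (((n:ℝ) + 1) * ((n:ℝ) + 2))) := by
        rw [hbetaval n, hbetaval (n+1)]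
        push_cast
        have h1 : (n:ℝ) + 1 ≠ 0 := by positivity
        have h2 : (n:ℝ) + 1 + 1 ≠ 0 := by positivity
        field_simp
        ring
      rw [hb1, abs_neg, abs_of_nonneg (by positivity)]
    have h3 : |beta n - beta (n+1)| * dist u (x (n+1)) ≤
        1 / (((n:ℝ) + 1) * ((n:ℝ) + 2)) * (2 * M) := by
      rw [habs]
      exact mul_le_mul_of_nonneg_left (hxbu (n+1)) (by positivity)
    have hbn : beta n = 1 - 1 / ((n:ℝ) + 1) := hbetaval n
    have key : dist (x (n+1)) (x (n+2)) ≤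
        (1 - 1 / ((n:ℝ) + 1)) * dist (x n) (x (n+1)) +
          1 / (((n:ℝ) + 1) * ((n:ℝ) + 2)) * (2 * M) := by
      rw [hbn] at hstep2 h3
      linarith [hstep1, hstep2, h3]
    have hn1 : (0:ℝ) < (n:ℝ) + 1 := by positivity
    calc ((n:ℝ) + 1) * dist (x (n+1)) (x (n+2))
        ≤ ((n:ℝ) + 1) * ((1 - 1 / ((n:ℝ) + 1)) * dist (x n) (x (n+1)) +
            1 / (((n:ℝ) + 1) * ((n:ℝ) + 2)) * (2 * M)) :=
          mul_le_mul_of_nonneg_left key hn1.le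
      _ = (n:ℝ) * dist (x n) (x (n+1)) + 2 * M / ((n:ℝ) + 2) := by
          have h1 : (n:ℝ) + 1 ≠ 0 := by positivity
          have h2 : (n:ℝ) + 2 ≠ 0 := by positivity
          field_simp
          ring
  -- main induction
  have hmain : ∀ n : ℕ, (n:ℝ) * dist (x n) (x (n+1)) ≤
      4 * M * (Real.sqrt ((n:ℝ) + 1) - 1) := by
    intro n
    induction n with
    | zero => simp
    | succ m ih =>
      have hrm := hrec m
      have hs1sq : (Real.sqrt ((m:ℝ) + 1)) ^ 2 = (m:ℝ) + 1 := Real.sq_sqrt (by positivity)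
      have hs2sq : (Real.sqrt ((m:ℝ) + 2)) ^ 2 = (m:ℝ) + 2 := Real.sq_sqrt (by positivity)
      have hs1one : 1 ≤ Real.sqrt ((m:ℝ) + 1) := by
        nlinarith [hs1sq, Real.sqrt_nonneg ((m:ℝ) + 1), Nat.cast_nonneg (α := ℝ) m]
      have hs12 : Real.sqrt ((m:ℝ) + 1) ≤ Real.sqrt ((m:ℝ) + 2) :=
        Real.sqrt_le_sqrt (by linarith)
      have hs1le : Real.sqrt ((m:ℝ) + 1) ≤ (m:ℝ) + 1 := by nlinarith
      have hs2le : Real.sqrt ((m:ℝ) + 2) ≤ (m:ℝ) + 2 := by nlinarith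
      have hkey : 2 * M / ((m:ℝ) + 2) ≤
          4 * M * (Real.sqrt ((m:ℝ) + 2) - Real.sqrt ((m:ℝ) + 1)) := by
        rw [div_le_iff₀ (by positivity)]
        nlinarith [mul_nonneg (mul_nonneg hM0 (sub_nonneg.2 hs12))
          (by linarith : (0:ℝ) ≤ 2 * ((m:ℝ) + 2) - (Real.sqrt ((m:ℝ) + 1) + Real.sqrt ((m:ℝ) + 2)))]
      have hc : ((m:ℝ) + 1) + 1 = (m:ℝ) + 2 := by ring
      push_cast
      rw [hc]
      nlinarith [ih, hrm, hkey]
  -- conclusion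
  intro k n hn
  by_cases hK0 : K = 0
  · have hMz : M = 0 := le_antisymm (by rw [hK0] at hK; exact_mod_cast hK) hM0
    have h1 := hxb n
    have h2 := hxb (n+1)
    have : dist (x n) (x (n+1)) ≤ 0 := by
      calc dist (x n) (x (n+1)) ≤ dist (x n) p + dist p (x (n+1)) := dist_triangle _ _ _
        _ ≤ 0 := by rw [dist_comm p (x (n+1))]; rw [hMz] at h1 h2; linarith
    have hk1 : (0:ℝ) < 1 / ((k:ℝ) + 1) := by positivity
    calc dist (x n) (x (n+1)) ≤ 0 := this
      _ ≤ 1 / ((k:ℝ) + 1) := hk1.le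
  · have hK1 : (1:ℝ) ≤ (K:ℝ) := by
      have := Nat.one_le_iff_ne_zero.2 hK0
      exact_mod_cast this
    have hA1 : (1:ℝ) ≤ (K:ℝ) * ((k:ℝ) + 1) := by nlinarith [Nat.cast_nonneg (α := ℝ) k]
    have hA0 : (0:ℝ) ≤ (K:ℝ) * ((k:ℝ) + 1) := by linarith
    have hnR : 144 * ((K:ℝ) * ((k:ℝ) + 1)) ^ 2 + 6 * ((K:ℝ) * ((k:ℝ) + 1)) ≤ (n:ℝ) := by
      have h := (Nat.cast_le (α := ℝ)).2 hn
      push_cast at h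
      nlinarith [h]
    have hn1 : (1:ℝ) ≤ (n:ℝ) := by nlinarith
    have hnpos : (0:ℝ) < (n:ℝ) := by linarith
    have hssq : (Real.sqrt ((n:ℝ) + 1)) ^ 2 = (n:ℝ) + 1 := Real.sq_sqrt (by positivity)
    have hs0 : (0:ℝ) ≤ Real.sqrt ((n:ℝ) + 1) := Real.sqrt_nonneg _
    have hs1 : (1:ℝ) ≤ Real.sqrt ((n:ℝ) + 1) := by
      nlinarith [hssq, hs0, hn1]
    have h1 : (n:ℝ) * dist (x n) (x (n+1)) ≤ 4 * (K:ℝ) * Real.sqrt ((n:ℝ) + 1) := by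
      have hm := hmain n
      nlinarith [mul_le_mul_of_nonneg_right hK hs0]
    have h2 : 4 * ((K:ℝ) * ((k:ℝ) + 1)) * Real.sqrt ((n:ℝ) + 1) ≤ (n:ℝ) := by
      have h2a : (0:ℝ) ≤ ((n:ℝ) - 16 * ((K:ℝ) * ((k:ℝ) + 1)) ^ 2 - ((K:ℝ) * ((k:ℝ) + 1))) * (n:ℝ) :=
        mul_nonneg (by nlinarith [sq_nonneg ((K:ℝ) * ((k:ℝ) + 1))]) hnpos.le
      have h2b : (0:ℝ) ≤ ((K:ℝ) * ((k:ℝ) + 1)) * ((n:ℝ) - 16 * ((K:ℝ) * ((k:ℝ) + 1))) :=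
        mul_nonneg hA0 (by nlinarith [hA1, hnR])
      have hsq : 16 * ((K:ℝ) * ((k:ℝ) + 1)) ^ 2 * ((n:ℝ) + 1) ≤ (n:ℝ) ^ 2 := by
        nlinarith [h2a, h2b]
      have hsq' : 16 * ((K:ℝ) * ((k:ℝ) + 1)) ^ 2 * (Real.sqrt ((n:ℝ) + 1)) ^ 2 ≤ (n:ℝ) ^ 2 := by
        rw [hssq]; exact hsq
      nlinarith [hsq', hnpos, mul_nonneg hA0 hs0]
    rw [le_div_iff₀ (by positivity : (0:ℝ) < (k:ℝ) + 1)]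
    nlinarith [mul_le_mul_of_nonneg_left h1 (by positivity : (0:ℝ) ≤ (k:ℝ) + 1),
      h2, (dist_nonneg : (0:ℝ) ≤ dist (x n) (x (n+1))), hnpos]
end

section
/- (Quadratic rate of T-asymptotic regularity) In the Tikhonov-Mann setting, let λ ∈ (0,1] and take λ_n = λ and β_n = 1 − 1/(n+1) for every n ∈ ℕ, and let K ∈ ℕ satisfy K ≥ M. Then Φ₀(k) = 576K²⌈1/λ⌉²(k+1)² + 12K⌈1/λ⌉(k+1) is a rate of T-asymptotic regularity for (x_n), i.e., d(x_n,Tx_n) ≤ 1/(k+1) for all k ∈ ℕ and all n ≥ Φ₀(k). -/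
lemma harm_le_sqrt (n : ℕ) :
    ∑ j ∈ Finset.range n, (1:ℝ)/(j+2) ≤ 2*Real.sqrt (n+1) := by
  induction n with
  | zero => simp
  | succ n ih =>
    rw [Finset.sum_range_succ]
    push_cast
    set s := Real.sqrt ((n:ℝ)+1+1) with hs
    set t := Real.sqrt ((n:ℝ)+1) with ht
    have hs2 : s^2 = (n:ℝ)+2 := by
      rw [hs, Real.sq_sqrt (by positivity)]; ring
    have ht2 : t^2 = (n:ℝ)+1 := Real.sq_sqrt (by positivity)
    have hts : t ≤ s := Real.sqrt_le_sqrt (by linarith)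
    have ht0 : 0 ≤ t := Real.sqrt_nonneg _
    have hsle : s ≤ (n:ℝ)+2 := by nlinarith [Real.sqrt_nonneg ((n:ℝ)+1+1)]
    have htle : t ≤ (n:ℝ)+1 := by nlinarith
    have hkey : 1/((n:ℝ)+2) ≤ 2*s - 2*t := by
      rw [div_le_iff₀ (by positivity)]
      nlinarith
    linarith [ih]

set_option maxHeartbeats 1000000 in
theorem tm_quadratic_T_as_reg
    {X : Type*} [MetricSpace X] (H : WHyp X) (C : Set X)
    (hCconv : ∀ x ∈ C, ∀ y ∈ C, ∀ l ∈ Set.Icc (0:ℝ) 1, H.W x y l ∈ C)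
    (T : X → X) (hTmaps : ∀ x ∈ C, T x ∈ C)
    (hTne : ∀ x ∈ C, ∀ y ∈ C, dist (T x) (T y) ≤ dist x y)
    (p : X) (hpC : p ∈ C) (hpfix : T p = p)
    (u : X) (huC : u ∈ C)
    (lam beta : ℕ → ℝ)
    (hlam : ∀ n, lam n ∈ Set.Icc (0:ℝ) 1) (hbeta : ∀ n, beta n ∈ Set.Icc (0:ℝ) 1)
    (x y : ℕ → X) (hx0 : x 0 ∈ C)
    (hy : ∀ n, y n = H.W u (x n) (beta n))
    (hx : ∀ n, x (n + 1) = H.W (y n) (T (y n)) (lam n))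
    (M : ℝ) (hM : M = max (dist (x 0) p) (dist u p))
    (l : ℝ) (hl : l ∈ Set.Ioc (0:ℝ) 1)
    (hlamconst : ∀ n, lam n = l)
    (hbetaval : ∀ n : ℕ, beta n = 1 - 1 / (n + 1))
    (K : ℕ) (hK : M ≤ (K : ℝ)) :
    ∀ k : ℕ, ∀ n ≥ 576 * K ^ 2 * ⌈1 / l⌉₊ ^ 2 * (k + 1) ^ 2 + 12 * K * ⌈1 / l⌉₊ * (k + 1),
      dist (x n) (T (x n)) ≤ 1 / (k + 1) := by
  intro k n hn
  have hl0 : 0 < l := hl.1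
  have hl1 : l ≤ 1 := hl.2
  have hM0 : 0 ≤ M := by
    rw [hM]; exact le_trans dist_nonneg (le_max_left _ _)
  have hdup : dist u p ≤ M := by rw [hM]; exact le_max_right _ _
  have hdx0 : dist (x 0) p ≤ M := by rw [hM]; exact le_max_left _ _
  -- membership and boundedness
  have ystep : ∀ m : ℕ, x m ∈ C → dist (x m) p ≤ M →
      (y m ∈ C ∧ dist (y m) p ≤ M) := by
    intro m hxC hxM
    have hb := hbeta m
    refine ⟨by rw [hy]; exact hCconv u huC _ hxC _ hb, ?_⟩
    rw [hy, dist_comm]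
    have h1 := H.W1 u (x m) p (beta m) hb
    have h2 : dist p u ≤ M := by rw [dist_comm]; exact hdup
    have h3 : dist p (x m) ≤ M := by rw [dist_comm]; exact hxM
    nlinarith [hb.1, hb.2]
  have hmem : ∀ m : ℕ, x m ∈ C ∧ dist (x m) p ≤ M := by
    intro m
    induction m with
    | zero => exact ⟨hx0, hdx0⟩
    | succ m ih =>
      obtain ⟨hyC, hyM⟩ := ystep m ih.1 ih.2
      have hla := hlam m
      have hTyC : T (y m) ∈ C := hTmaps _ hyC
      refine ⟨by rw [hx]; exact hCconv _ hyC _ hTyC _ hla, ?_⟩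
      rw [hx, dist_comm]
      have h1 := H.W1 (y m) (T (y m)) p (lam m) hla
      have h2 : dist p (y m) ≤ M := by rw [dist_comm]; exact hyM
      have h3 : dist p (T (y m)) ≤ M := by
        rw [dist_comm]
        calc dist (T (y m)) p = dist (T (y m)) (T p) := by rw [hpfix]
        _ ≤ dist (y m) p := hTne _ hyC _ hpC
        _ ≤ M := hyM
      nlinarith [hla.1, hla.2]
  have hymem : ∀ m : ℕ, y m ∈ C ∧ dist (y m) p ≤ M :=
    fun m => ystep m (hmem m).1 (hmem m).2
  -- the recurrence for a_n = dist (x n) (x (n+1))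
  have hux : ∀ m : ℕ, dist u (x m) ≤ 2*M := by
    intro m
    calc dist u (x m) ≤ dist u p + dist p (x m) := dist_triangle _ _ _
    _ ≤ M + M := by
        have := (hmem m).2; rw [dist_comm p]; linarith
    _ = 2*M := by ring
  have hrec : ∀ m : ℕ, dist (x (m+1)) (x (m+2)) ≤
      beta m * dist (x m) (x (m+1)) + 2*M * (1/(((m:ℝ)+1)*((m:ℝ)+2))) := by
    intro m
    have step1 : dist (x (m+1)) (x (m+2)) ≤ dist (y m) (y (m+1)) := by
      rw [hx m, hx (m+1), hlamconst m, hlamconst (m+1)]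
      have h4 := H.W4 (y m) (y (m+1)) (T (y m)) (T (y (m+1))) l ⟨le_of_lt hl0, hl1⟩
      have hne := hTne _ (hymem m).1 _ (hymem (m+1)).1
      nlinarith [(dist_nonneg : (0:ℝ) ≤ dist (y m) (y (m+1)))]
    have hb := hbeta m
    have hb' := hbeta (m+1)
    have step2a : dist (H.W u (x m) (beta m)) (H.W u (x (m+1)) (beta m)) ≤
        beta m * dist (x m) (x (m+1)) := by
      have h4 := H.W4 u u (x m) (x (m+1)) (beta m) hb
      simpa using h4
    have step2b : dist (H.W u (x (m+1)) (beta m)) (H.W u (x (m+1)) (beta (m+1)))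
        = |beta m - beta (m+1)| * dist u (x (m+1)) :=
      H.W2 u (x (m+1)) (beta m) hb (beta (m+1)) hb'
    have habs : |beta m - beta (m+1)| = 1/(((m:ℝ)+1)*((m:ℝ)+2)) := by
      have hval : beta m - beta (m+1) = -(1/(((m:ℝ)+1)*((m:ℝ)+2))) := by
        rw [hbetaval m, hbetaval (m+1)]
        push_cast
        field_simp
        ring
      rw [hval, abs_neg, abs_of_nonneg (by positivity)]
    have step2 : dist (y m) (y (m+1)) ≤
        beta m * dist (x m) (x (m+1)) + 2*M * (1/(((m:ℝ)+1)*((m:ℝ)+2))) := by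
      rw [hy m, hy (m+1)]
      calc dist (H.W u (x m) (beta m)) (H.W u (x (m+1)) (beta (m+1)))
          ≤ dist (H.W u (x m) (beta m)) (H.W u (x (m+1)) (beta m))
            + dist (H.W u (x (m+1)) (beta m)) (H.W u (x (m+1)) (beta (m+1))) :=
            dist_triangle _ _ _
        _ ≤ beta m * dist (x m) (x (m+1)) + 1/(((m:ℝ)+1)*((m:ℝ)+2)) * dist u (x (m+1)) := by
            rw [step2b, habs]; linarith
        _ ≤ beta m * dist (x m) (x (m+1)) + 2*M * (1/(((m:ℝ)+1)*((m:ℝ)+2))) := by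
            have h5 := hux (m+1)
            have h6 : (0:ℝ) < 1/(((m:ℝ)+1)*((m:ℝ)+2)) := by positivity
            nlinarith
    linarith
  -- summation
  have hsum : ∀ m : ℕ, (m:ℝ) * dist (x m) (x (m+1)) ≤
      2*M* ∑ j ∈ Finset.range m, (1:ℝ)/(j+2) := by
    intro m
    induction m with
    | zero => simp
    | succ m ih =>
      rw [Finset.sum_range_succ]
      have h1 := hrec m
      have h2 : ((m:ℝ)+1) * dist (x (m+1)) (x (m+2)) ≤
          ((m:ℝ)+1) * (beta m * dist (x m) (x (m+1)) + 2*M * (1/(((m:ℝ)+1)*((m:ℝ)+2)))) :=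
        mul_le_mul_of_nonneg_left h1 (by positivity)
      have h3 : ((m:ℝ)+1) * (beta m * dist (x m) (x (m+1)) + 2*M * (1/(((m:ℝ)+1)*((m:ℝ)+2))))
          = (m:ℝ) * dist (x m) (x (m+1)) + 2*M * (1/((m:ℝ)+2)) := by
        rw [hbetaval m]
        push_cast
        field_simp
        ring
      push_cast
      rw [mul_add]
      push_cast at h2 h3 ⊢
      linarith
  -- pointwise facts at n
  have hb := hbeta n
  have hD : dist (x n) (y n) ≤ 2*M * (1/((n:ℝ)+1)) := by
    rw [hy n]
    have h1 := H.W1 u (x n) (x n) (beta n) hb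
    have h2 : (1:ℝ) - beta n = 1/((n:ℝ)+1) := by
      rw [hbetaval n]; push_cast; ring
    have h3 : dist (x n) u ≤ 2*M := by rw [dist_comm]; exact hux n
    rw [dist_self] at h1
    rw [h2] at h1
    have h4 : (0:ℝ) < 1/((n:ℝ)+1) := by positivity
    nlinarith
  have hF2 : l * dist (y n) (T (y n)) ≤
      dist (x n) (x (n+1)) + dist (x n) (y n) := by
    have h1 : dist (y n) (T (y n)) ≤ dist (y n) (x (n+1)) + dist (x (n+1)) (T (y n)) :=
      dist_triangle _ _ _
    have h2 : dist (x (n+1)) (T (y n)) ≤ (1-l) * dist (y n) (T (y n)) := by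
      rw [hx n, hlamconst n, dist_comm]
      have h3 := H.W1 (y n) (T (y n)) (T (y n)) l ⟨le_of_lt hl0, hl1⟩
      rw [dist_self] at h3
      rw [dist_comm (T (y n)) (y n)] at h3
      linarith
    have h4 : dist (y n) (x (n+1)) ≤ dist (y n) (x n) + dist (x n) (x (n+1)) :=
      dist_triangle _ _ _
    rw [dist_comm (y n) (x n)] at h4
    linarith
  have hF3 : dist (x n) (T (x n)) ≤
      2 * dist (x n) (y n) + dist (y n) (T (y n)) := by
    have h1 : dist (x n) (T (x n)) ≤ dist (x n) (y n) + dist (y n) (T (x n)) :=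
      dist_triangle _ _ _
    have h2 : dist (y n) (T (x n)) ≤ dist (y n) (T (y n)) + dist (T (y n)) (T (x n)) :=
      dist_triangle _ _ _
    have h3 : dist (T (y n)) (T (x n)) ≤ dist (y n) (x n) := hTne _ (hymem n).1 _ (hmem n).1
    rw [dist_comm (y n) (x n)] at h3
    linarith
  -- case split on K
  rcases Nat.eq_zero_or_pos K with hK0 | hK1
  · have hMz : M = 0 := by
      rw [hK0] at hK; push_cast at hK; linarith
    have h1 : dist (x n) (T (x n)) ≤ dist (x n) p + dist p (T (x n)) := dist_triangle _ _ _
    have h2 : dist p (T (x n)) ≤ M := by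
      rw [dist_comm]
      calc dist (T (x n)) p = dist (T (x n)) (T p) := by rw [hpfix]
      _ ≤ dist (x n) p := hTne _ (hmem n).1 _ hpC
      _ ≤ M := (hmem n).2
    have h3 := (hmem n).2
    have h4 : (0:ℝ) < 1/((k:ℝ)+1) := by positivity
    have : dist (x n) (T (x n)) ≤ 1/((k:ℝ)+1) := by linarith
    exact_mod_cast this
  · -- K ≥ 1
    obtain ⟨c, hc⟩ : ∃ c : ℝ, c = ((⌈1/l⌉₊ : ℕ) : ℝ) := ⟨_, rfl⟩
    have hcl : 1/l ≤ c := by rw [hc]; exact Nat.le_ceil _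
    have hl1' : (1:ℝ) ≤ 1/l := by
      rw [le_div_iff₀ hl0]; linarith
    have hc1 : (1:ℝ) ≤ c := le_trans hl1' hcl
    have hK1' : (1:ℝ) ≤ (K:ℝ) := by exact_mod_cast hK1
    obtain ⟨B, hB⟩ : ∃ B : ℝ, B = 6*(K:ℝ)*c*((k:ℝ)+1) := ⟨_, rfl⟩
    have hk0 : (1:ℝ) ≤ (k:ℝ)+1 := by
      have : (0:ℝ) ≤ (k:ℝ) := Nat.cast_nonneg k
      linarith
    have hkc : (1:ℝ) ≤ (K:ℝ)*c := by nlinarith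
    have hkc2 : (1:ℝ) ≤ (K:ℝ)*c*((k:ℝ)+1) := by nlinarith
    have hB6 : 6 ≤ B := by
      have e : B = 6*((K:ℝ)*c*((k:ℝ)+1)) := by rw [hB]; ring
      rw [e]; linarith
    have hB0 : 0 < B := by linarith
    have hnB : 16*B^2 + 2*B ≤ (n:ℝ) := by
      have hn' : ((576 * K ^ 2 * ⌈1 / l⌉₊ ^ 2 * (k + 1) ^ 2 + 12 * K * ⌈1 / l⌉₊ * (k + 1) : ℕ) : ℝ)
          ≤ (n:ℝ) := by exact_mod_cast hn
      push_cast at hn'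
      have e : 16*B^2 + 2*B
          = 576*(K:ℝ)^2*((⌈1/l⌉₊:ℕ):ℝ)^2*((k:ℝ)+1)^2 + 12*(K:ℝ)*((⌈1/l⌉₊:ℕ):ℝ)*((k:ℝ)+1) := by
        rw [hB, hc]; ring
      linarith
    have hn1 : (1:ℝ) ≤ (n:ℝ) := by nlinarith [hnB, hB6]
    have hn0 : (0:ℝ) < (n:ℝ) := by linarith
    -- a_n bound
    have hA : (n:ℝ) * dist (x n) (x (n+1)) ≤ 4*M*Real.sqrt ((n:ℝ)+1) := by
      calc (n:ℝ) * dist (x n) (x (n+1)) ≤ 2*M* ∑ j ∈ Finset.range n, (1:ℝ)/(j+2) := hsum n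
      _ ≤ 2*M*(2*Real.sqrt ((n:ℝ)+1)) := by
          have := harm_le_sqrt n
          nlinarith
      _ = 4*M*Real.sqrt ((n:ℝ)+1) := by ring
    have hsq : Real.sqrt ((n:ℝ)+1) ≤ (n:ℝ)/B := by
      rw [show ((n:ℝ)+1) = Real.sqrt (((n:ℝ)+1))^2 from (Real.sq_sqrt (by positivity)).symm] at hA
      have hnn : (n:ℝ)+1 ≤ ((n:ℝ)/B)^2 := by
        rw [div_pow, le_div_iff₀ (by positivity)]
        nlinarith
      have := Real.sqrt_le_sqrt hnn
      calc Real.sqrt ((n:ℝ)+1) ≤ Real.sqrt (((n:ℝ)/B)^2) := this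
      _ = (n:ℝ)/B := Real.sqrt_sq (by positivity)
    -- combine
    have hcA : c * dist (x n) (x (n+1)) ≤ 2/(3*((k:ℝ)+1)) := by
      have h1 : c * dist (x n) (x (n+1)) * (n:ℝ) ≤ (4*(K:ℝ)*c/B) * (n:ℝ) := by
        have e1 : c * dist (x n) (x (n+1)) * (n:ℝ) = c * ((n:ℝ) * dist (x n) (x (n+1))) := by ring
        rw [e1]
        calc c * ((n:ℝ) * dist (x n) (x (n+1))) ≤ c * (4*M*Real.sqrt ((n:ℝ)+1)) := by
              have := hA; nlinarith
        _ ≤ c * (4*(K:ℝ)*((n:ℝ)/B)) := by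
              have hs0 := Real.sqrt_nonneg ((n:ℝ)+1)
              have hMK : M ≤ (K:ℝ) := hK
              have : 4*M*Real.sqrt ((n:ℝ)+1) ≤ 4*(K:ℝ)*((n:ℝ)/B) := by
                calc 4*M*Real.sqrt ((n:ℝ)+1) ≤ 4*(K:ℝ)*Real.sqrt ((n:ℝ)+1) := by nlinarith
                _ ≤ 4*(K:ℝ)*((n:ℝ)/B) := by
                    have : (0:ℝ) ≤ 4*(K:ℝ) := by linarith
                    nlinarith [hsq]
              nlinarith
        _ = (4*(K:ℝ)*c/B) * (n:ℝ) := by field_simp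
      have h2 : c * dist (x n) (x (n+1)) ≤ 4*(K:ℝ)*c/B :=
        le_of_mul_le_mul_right h1 hn0
      have h3 : 4*(K:ℝ)*c/B = 2/(3*((k:ℝ)+1)) := by
        rw [hB, div_eq_div_iff (by positivity) (by positivity)]
        ring
      linarith
    have hcD : (2 + c) * dist (x n) (y n) ≤ 1/(3*((k:ℝ)+1)) := by
      have h1 : (2 + c) * dist (x n) (y n) ≤ 3*c * (2*M*(1/((n:ℝ)+1))) := by
        have hDn : (0:ℝ) ≤ dist (x n) (y n) := dist_nonneg
        nlinarith [hD]
      have h2 : 3*c * (2*M*(1/((n:ℝ)+1))) ≤ 6*(K:ℝ)*c/((n:ℝ)+1) := by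
        have e2 : 3*c*(2*M*(1/((n:ℝ)+1))) = 6*M*c/((n:ℝ)+1) := by ring
        rw [e2, div_le_div_iff₀ (by positivity) (by positivity)]
        have hc0 : (0:ℝ) ≤ c := by linarith
        nlinarith [mul_le_mul_of_nonneg_right hK hc0]
      have hBsq : 6*B ≤ B^2 := by
        have e5 : (B-6)*B = B^2 - 6*B := by ring
        have e6 : (0:ℝ) ≤ (B-6)*B := mul_nonneg (by linarith) (le_of_lt hB0)
        linarith
      have h3 : 6*(K:ℝ)*c/((n:ℝ)+1) ≤ 1/(3*((k:ℝ)+1)) := by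
        rw [div_le_div_iff₀ (by positivity) (by positivity)]
        have e4 : 6*(K:ℝ)*c*(3*((k:ℝ)+1)) = 3*B := by rw [hB]; ring
        linarith
      linarith
    have hTy : dist (y n) (T (y n)) ≤ c * (dist (x n) (x (n+1)) + dist (x n) (y n)) := by
      have h0 : (0:ℝ) ≤ dist (x n) (x (n+1)) + dist (x n) (y n) := by positivity
      calc dist (y n) (T (y n))
          ≤ (dist (x n) (x (n+1)) + dist (x n) (y n)) * (1/l) := by
            rw [mul_one_div, le_div_iff₀ hl0]; linarith [hF2]
        _ ≤ (dist (x n) (x (n+1)) + dist (x n) (y n)) * c :=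
            mul_le_mul_of_nonneg_left hcl h0
        _ = c * (dist (x n) (x (n+1)) + dist (x n) (y n)) := by ring
    have hfinal : dist (x n) (T (x n)) ≤ 1/((k:ℝ)+1) := by
      have hsplit : 1/(3*((k:ℝ)+1)) + 2/(3*((k:ℝ)+1)) = 1/((k:ℝ)+1) := by
        have e3 : 1/(3*((k:ℝ)+1)) + 2/(3*((k:ℝ)+1)) = 3/(3*((k:ℝ)+1)) := by ring
        rw [e3, div_eq_div_iff (by positivity) (by positivity)]
        ring
      have e : 2 * dist (x n) (y n) + c * (dist (x n) (x (n+1)) + dist (x n) (y n))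
          = c * dist (x n) (x (n+1)) + (2 + c) * dist (x n) (y n) := by ring
      linarith [hF3, hTy, hcA, hcD]
    exact_mod_cast hfinal
end

section
/- (Quantitative Xu lemma, divergence version) Let (a_n) be a sequence in [0,1] and (c_n), (s_n) sequences of nonnegative reals such that s_{n+1} ≤ (1−a_n)s_n + c_n for all n ∈ ℕ. Let L ∈ ℕ, L ≥ 1, be an upper bound on (s_n), let χ : ℕ → ℕ be a Cauchy modulus for the convergent series ∑ c_n, and let θ : ℕ → ℕ be a rate of divergence for the series ∑ a_n. Then Σ(k) = θ(χ(3k+2) + 1 + ⌈ln(3L(k+1))⌉) + 1 is a rate of convergence of (s_n) towards 0, i.e., s_n ≤ 1/(k+1) for all k ∈ ℕ and all n ≥ Σ(k). -/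
theorem quant_xu_divergence
    (a c s : ℕ → ℝ)
    (ha : ∀ n, a n ∈ Set.Icc (0:ℝ) 1)
    (hc : ∀ n, 0 ≤ c n) (hs : ∀ n, 0 ≤ s n)
    (hrec : ∀ n, s (n + 1) ≤ (1 - a n) * s n + c n)
    (L : ℕ) (hL1 : 1 ≤ L) (hLub : ∀ n, s n ≤ (L : ℝ))
    (χ : ℕ → ℕ)
    (hχ : ∀ k : ℕ, ∀ n ≥ χ k, ∀ q : ℕ,
      ∑ i ∈ Finset.Icc (n + 1) (n + q), c i ≤ 1 / (k + 1))
    (θ : ℕ → ℕ)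
    (hθ : ∀ n : ℕ, (n : ℝ) ≤ ∑ i ∈ Finset.range (θ n + 1), a i)
    (Sg : ℕ → ℕ)
    (hSg : ∀ k : ℕ,
      Sg k = θ (χ (3 * k + 2) + 1 + ⌈Real.log (3 * L * (k + 1))⌉₊) + 1) :
    ∀ k : ℕ, ∀ n ≥ Sg k, s n ≤ 1 / (k + 1) := by
  intro k n hn
  set N : ℕ := χ (3 * k + 2) + 1 with hNdef
  set M : ℕ := ⌈Real.log (3 * L * (k + 1))⌉₊ with hMdef
  have hSgk : Sg k = θ (N + M) + 1 := hSg k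
  rw [hSgk] at hn
  -- key recursive inequality
  have key : ∀ m j, m ≤ j → s j ≤ (∏ i ∈ Finset.Ico m j, (1 - a i)) * s m
      + ∑ i ∈ Finset.Ico m j, c i := by
    intro m j h
    induction j with
    | zero =>
      have : m = 0 := Nat.le_zero.mp h
      subst this; simp
    | succ j ih =>
      rcases Nat.lt_or_ge m (j + 1) with h' | h'
      · have hmj : m ≤ j := Nat.lt_succ_iff.mp h'
        have hind := ih hmj
        have h1a0 : 0 ≤ 1 - a j := by have := (ha j).2; linarith
        have h1a1 : 1 - a j ≤ 1 := by have := (ha j).1; linarith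
        have hP : 0 ≤ ∏ i ∈ Finset.Ico m j, (1 - a i) :=
          Finset.prod_nonneg (fun i _ => by have := (ha i).2; linarith)
        have hC : 0 ≤ ∑ i ∈ Finset.Ico m j, c i :=
          Finset.sum_nonneg fun i _ => hc i
        rw [Finset.prod_Ico_succ_top hmj, Finset.sum_Ico_succ_top hmj]
        calc s (j + 1) ≤ (1 - a j) * s j + c j := hrec j
          _ ≤ (1 - a j) * ((∏ i ∈ Finset.Ico m j, (1 - a i)) * s m
              + ∑ i ∈ Finset.Ico m j, c i) + c j := by
              exact add_le_add_left (mul_le_mul_of_nonneg_left hind h1a0) _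
          _ ≤ _ := by nlinarith [hs m, mul_nonneg hP (hs m)]
      · have : m = j + 1 := le_antisymm h h'
        subst this; simp
  -- θ(N+M)+1 ≥ N+M, so n ≥ N
  have hθge : (N + M : ℕ) ≤ θ (N + M) + 1 := by
    have h1 := hθ (N + M)
    have h2 : ∑ i ∈ Finset.range (θ (N + M) + 1), a i ≤ (θ (N + M) + 1 : ℕ) := by
      calc ∑ i ∈ Finset.range (θ (N + M) + 1), a i
          ≤ ∑ i ∈ Finset.range (θ (N + M) + 1), (1 : ℝ) :=
            Finset.sum_le_sum fun i _ => (ha i).2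
        _ = (θ (N + M) + 1 : ℕ) := by simp
    exact_mod_cast h1.trans h2
  have hnN : N ≤ n := le_trans (by omega) hn
  -- sum of a over Ico N n is at least M
  have hsum_a : (M : ℝ) ≤ ∑ i ∈ Finset.Ico N n, a i := by
    have hsplit : ∑ i ∈ Finset.Ico N n, a i
        = ∑ i ∈ Finset.range n, a i - ∑ i ∈ Finset.range N, a i := by
      rw [Finset.sum_Ico_eq_sub _ hnN]
    have h1 : ∑ i ∈ Finset.range N, a i ≤ (N : ℝ) := by
      calc ∑ i ∈ Finset.range N, a i ≤ ∑ i ∈ Finset.range N, (1 : ℝ) :=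
            Finset.sum_le_sum fun i _ => (ha i).2
        _ = (N : ℝ) := by simp
    have h2 : ((N : ℝ) + M) ≤ ∑ i ∈ Finset.range n, a i := by
      have hmono : ∑ i ∈ Finset.range (θ (N + M) + 1), a i
          ≤ ∑ i ∈ Finset.range n, a i := by
        apply Finset.sum_le_sum_of_subset_of_nonneg
        · exact Finset.range_subset_range.mpr (by omega)
        · intro i _ _; exact (ha i).1
      have := (hθ (N + M)).trans hmono
      push_cast at this ⊢
      linarith
    linarith
  -- product bound
  have hprod : ∏ i ∈ Finset.Ico N n, (1 - a i)
      ≤ 1 / (3 * L * (k + 1) : ℝ) := by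
    have hstep : ∏ i ∈ Finset.Ico N n, (1 - a i)
        ≤ ∏ i ∈ Finset.Ico N n, Real.exp (-(a i)) := by
      apply Finset.prod_le_prod
      · intro i _; have := (ha i).2; linarith
      · intro i _
        have := Real.add_one_le_exp (-(a i))
        linarith
    have hexp : ∏ i ∈ Finset.Ico N n, Real.exp (-(a i))
        = Real.exp (-(∑ i ∈ Finset.Ico N n, a i)) := by
      rw [← Real.exp_sum]; congr 1; rw [Finset.sum_neg_distrib]
    have hpos : (0 : ℝ) < 3 * L * (k + 1) := by positivity
    have hlog : Real.log (3 * L * (k + 1)) ≤ (M : ℝ) := Nat.le_ceil _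
    have : Real.exp (-(∑ i ∈ Finset.Ico N n, a i)) ≤ Real.exp (-(M : ℝ)) :=
      Real.exp_le_exp.mpr (by linarith)
    have h2 : Real.exp (-(M : ℝ)) ≤ Real.exp (-(Real.log (3 * L * (k + 1)))) :=
      Real.exp_le_exp.mpr (by linarith)
    have h3 : Real.exp (-(Real.log (3 * L * (k + 1)))) = 1 / (3 * L * (k + 1) : ℝ) := by
      rw [Real.exp_neg, Real.exp_log hpos, one_div]
    calc ∏ i ∈ Finset.Ico N n, (1 - a i)
        ≤ Real.exp (-(∑ i ∈ Finset.Ico N n, a i)) := by rw [← hexp]; exact hstep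
      _ ≤ 1 / (3 * L * (k + 1) : ℝ) := by rw [← h3]; exact this.trans h2
  -- error sum bound
  have hsum_c : ∑ i ∈ Finset.Ico N n, c i ≤ 1 / (3 * (k : ℝ) + 3) := by
    have heq : Finset.Ico N n
        = Finset.Icc (χ (3 * k + 2) + 1) (χ (3 * k + 2) + (n - N)) := by
      rw [← Finset.Ico_add_one_right_eq_Icc]
      congr 1
      omega
    rw [heq]
    have := hχ (3 * k + 2) (χ (3 * k + 2)) le_rfl (n - N)
    have hcast : ((3 * k + 2 : ℕ) : ℝ) + 1 = 3 * (k : ℝ) + 3 := by push_cast; ring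
    rw [hcast] at this
    exact this
  -- assemble
  have hmain := key N n hnN
  have hsN : s N ≤ (L : ℝ) := hLub N
  have hLpos : (0 : ℝ) < L := by exact_mod_cast hL1
  have hprod_nonneg : 0 ≤ ∏ i ∈ Finset.Ico N n, (1 - a i) :=
    Finset.prod_nonneg (fun i _ => by have := (ha i).2; linarith)
  have h1 : (∏ i ∈ Finset.Ico N n, (1 - a i)) * s N
      ≤ 1 / (3 * L * (k + 1) : ℝ) * L := by
    apply mul_le_mul hprod (hLub N) (hs N) (by positivity)
  have h2 : 1 / (3 * L * (k + 1) : ℝ) * L = 1 / (3 * ((k : ℝ) + 1)) := by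
    field_simp
  have hk1 : (0 : ℝ) < (k : ℝ) + 1 := by positivity
  calc s n ≤ (∏ i ∈ Finset.Ico N n, (1 - a i)) * s N
        + ∑ i ∈ Finset.Ico N n, c i := hmain
    _ ≤ 1 / (3 * ((k : ℝ) + 1)) + 1 / (3 * (k : ℝ) + 3) := by
        rw [← h2]; exact add_le_add h1 hsum_c
    _ ≤ 1 / ((k : ℝ) + 1) := by
        rw [div_add_div _ _ (by positivity) (by positivity), div_le_div_iff₀ (by positivity) hk1]
        ring_nf
        nlinarith [hk1]
end

section
/- (Quantitative Xu lemma, product version) Let (a_n) be a sequence in [0,1] with a_n < 1 for all n, and (c_n), (s_n) sequences of nonnegative reals such that s_{n+1} ≤ (1−a_n)s_n + c_n for all n ∈ ℕ. Let L ∈ ℕ, L ≥ 1, be an upper bound on (s_n), let χ : ℕ → ℕ be a Cauchy modulus for the convergent series ∑ c_n, set A_n = ∏_{i=0}^{n}(1−a_i), and let γ : ℕ → ℕ be a rate of convergence of (A_n) towards 0. Suppose δ₀ : ℕ → ℕ takes positive values and satisfies 1/δ₀(k) ≤ A_{χ(3k+2)} for all k ∈ ℕ. Then Σ̃(k) = max{γ(3L(k+1)δ₀(k)−1),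 χ(3k+2)+1} + 1 is a rate of convergence of (s_n) towards 0, i.e., s_n ≤ 1/(k+1) for all k ∈ ℕ and all n ≥ Σ̃(k). -/
theorem quant_xu_product
    (a c s : ℕ → ℝ)
    (ha : ∀ n, a n ∈ Set.Icc (0:ℝ) 1) (ha1 : ∀ n, a n < 1)
    (hc : ∀ n, 0 ≤ c n) (hs : ∀ n, 0 ≤ s n)
    (hrec : ∀ n, s (n + 1) ≤ (1 - a n) * s n + c n)
    (L : ℕ) (hL1 : 1 ≤ L) (hLub : ∀ n, s n ≤ (L : ℝ))
    (χ : ℕ → ℕ)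
    (hχ : ∀ k : ℕ, ∀ n ≥ χ k, ∀ q : ℕ,
      ∑ i ∈ Finset.Icc (n + 1) (n + q), c i ≤ 1 / (k + 1))
    (γ : ℕ → ℕ)
    (hγ : ∀ k : ℕ, ∀ n ≥ γ k,
      |∏ i ∈ Finset.range (n + 1), (1 - a i)| ≤ 1 / (k + 1))
    (δ₀ : ℕ → ℕ) (hδ₀pos : ∀ k, 0 < δ₀ k)
    (hδ₀ : ∀ k : ℕ,
      1 / (δ₀ k : ℝ) ≤ ∏ i ∈ Finset.range (χ (3 * k + 2) + 1), (1 - a i))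
    (Sg : ℕ → ℕ)
    (hSg : ∀ k : ℕ,
      Sg k = max (γ (3 * L * (k + 1) * δ₀ k - 1)) (χ (3 * k + 2) + 1) + 1) :
    ∀ k : ℕ, ∀ n ≥ Sg k, s n ≤ 1 / (k + 1) := by
  intro k n hn
  rw [hSg k] at hn
  set m := χ (3 * k + 2) + 1 with hm
  have hmn : m ≤ n := by
    have := le_max_right (γ (3 * L * (k + 1) * δ₀ k - 1)) (χ (3 * k + 2) + 1)
    omega
  have hfac : ∀ i, 0 < 1 - a i := fun i => by linarith [ha1 i]
  have hfacle : ∀ i, 1 - a i ≤ 1 := fun i => by have := (ha i).1; linarith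
  -- unfolded recurrence
  have key : ∀ N, m ≤ N → s N ≤ (∏ i ∈ Finset.Ico m N, (1 - a i)) * s m
      + ∑ i ∈ Finset.Ico m N, c i := by
    intro N hN
    induction N, hN using Nat.le_induction with
    | base => simp
    | succ N hN ih =>
      have hP : 0 ≤ ∏ i ∈ Finset.Ico m N, (1 - a i) :=
        Finset.prod_nonneg fun i _ => (hfac i).le
      have hS : 0 ≤ ∑ i ∈ Finset.Ico m N, c i := Finset.sum_nonneg fun i _ => hc i
      calc s (N+1) ≤ (1 - a N) * s N + c N := hrec N
        _ ≤ (1 - a N) * ((∏ i ∈ Finset.Ico m N, (1 - a i)) * s m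
              + ∑ i ∈ Finset.Ico m N, c i) + c N := by
            nlinarith [hfac N, ih]
        _ ≤ _ := by
            rw [Finset.prod_Ico_succ_top hN, Finset.sum_Ico_succ_top hN]
            nlinarith [hfacle N, hfac N, hs m, mul_nonneg hP (hs m), hS]
  have hkey := key n hmn
  -- sum bound
  have hsum : ∑ i ∈ Finset.Ico m n, c i ≤ 1 / (3 * (k:ℝ) + 3) := by
    have h := hχ (3 * k + 2) (χ (3 * k + 2)) le_rfl (n - m)
    have heq : Finset.Icc (χ (3 * k + 2) + 1) (χ (3 * k + 2) + (n - m))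
        = Finset.Ico m n := by
      rw [hm]; ext x
      simp only [Finset.mem_Icc, Finset.mem_Ico]
      omega
    rw [heq] at h
    have : ((3 * k + 2 : ℕ) : ℝ) + 1 = 3 * (k:ℝ) + 3 := by push_cast; ring
    rw [this] at h
    exact h
  -- product bound
  have hIconn : 0 ≤ ∏ i ∈ Finset.Ico m n, (1 - a i) :=
    Finset.prod_nonneg fun i _ => (hfac i).le
  have hA : (∏ i ∈ Finset.range m, (1 - a i)) * ∏ i ∈ Finset.Ico m n, (1 - a i)
      = ∏ i ∈ Finset.range n, (1 - a i) := Finset.prod_range_mul_prod_Ico _ hmn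
  have hd : (0:ℝ) < δ₀ k := by exact_mod_cast hδ₀pos k
  have hlow : (1:ℝ) / δ₀ k ≤ ∏ i ∈ Finset.range m, (1 - a i) := hδ₀ k
  have h1 : (1:ℝ) ≤ (δ₀ k : ℝ) * ∏ i ∈ Finset.range m, (1 - a i) := by
    rw [div_le_iff₀ hd] at hlow; linarith [hlow]
  have hPI : ∏ i ∈ Finset.Ico m n, (1 - a i)
      ≤ (δ₀ k : ℝ) * ∏ i ∈ Finset.range n, (1 - a i) := by
    nlinarith [mul_nonneg hIconn (sub_nonneg.2 h1)]
  -- γ bound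
  have hKnat : (3 * L * (k + 1) * δ₀ k - 1) + 1 = 3 * L * (k + 1) * δ₀ k := by
    have := hδ₀pos k
    have h0 : 0 < 3 * L * (k + 1) :=
      Nat.mul_pos (by omega) (Nat.succ_pos k)
    have : 1 ≤ 3 * L * (k + 1) * δ₀ k :=
      le_trans (hδ₀pos k) (Nat.le_mul_of_pos_left (δ₀ k) h0)
    omega
  have hγn : ∏ i ∈ Finset.range n, (1 - a i)
      ≤ 1 / (3 * (L:ℝ) * ((k:ℝ) + 1) * (δ₀ k : ℝ)) := by
    have h := hγ (3 * L * (k + 1) * δ₀ k - 1) (n - 1) (by omega)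
    rw [show (n - 1) + 1 = n by omega] at h
    have hc1 : ((3 * L * (k + 1) * δ₀ k - 1 : ℕ) : ℝ) + 1
        = 3 * (L:ℝ) * ((k:ℝ) + 1) * (δ₀ k : ℝ) := by
      rw [show ((3 * L * (k + 1) * δ₀ k - 1 : ℕ) : ℝ) + 1
          = ((3 * L * (k + 1) * δ₀ k : ℕ) : ℝ) by rw [← hKnat]; push_cast; ring]
      push_cast; ring
    rw [hc1] at h
    exact le_trans (le_abs_self _) h
  -- combine
  have hLpos : (0:ℝ) < L := by exact_mod_cast hL1
  have hden : (0:ℝ) < 3 * (L:ℝ) * ((k:ℝ) + 1) * (δ₀ k : ℝ) := by positivity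
  have hstep : (∏ i ∈ Finset.Ico m n, (1 - a i)) * s m ≤ 1 / (3 * ((k:ℝ) + 1)) := by
    have h2 : (∏ i ∈ Finset.Ico m n, (1 - a i)) * s m
        ≤ (δ₀ k : ℝ) * (1 / (3 * (L:ℝ) * ((k:ℝ) + 1) * (δ₀ k : ℝ))) * L := by
      have hsmL := hLub m
      have hsm := hs m
      have hrn : 0 ≤ ∏ i ∈ Finset.range n, (1 - a i) :=
        Finset.prod_nonneg fun i _ => (hfac i).le
      nlinarith [hγn, hPI, mul_le_mul hPI hsmL hsm
        (by positivity : (0:ℝ) ≤ (δ₀ k : ℝ) * ∏ i ∈ Finset.range n, (1 - a i)),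
        mul_le_mul_of_nonneg_left hγn (by positivity : (0:ℝ) ≤ (δ₀ k:ℝ) * L)]
    have h3 : (δ₀ k : ℝ) * (1 / (3 * (L:ℝ) * ((k:ℝ) + 1) * (δ₀ k : ℝ))) * L
        = 1 / (3 * ((k:ℝ) + 1)) := by
      field_simp
    linarith [h2, h3.le, h3.ge]
  have hk1 : (0:ℝ) < (k:ℝ) + 1 := by positivity
  have hfin : 1 / (3 * ((k:ℝ) + 1)) + 1 / (3 * (k:ℝ) + 3) ≤ 1 / ((k:ℝ) + 1) := by
    rw [show 3 * (k:ℝ) + 3 = 3 * ((k:ℝ)+1) by ring]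
    rw [← add_div, div_le_div_iff₀ (by positivity) hk1]
    ring_nf; nlinarith
  calc s n ≤ (∏ i ∈ Finset.Ico m n, (1 - a i)) * s m + ∑ i ∈ Finset.Ico m n, c i := hkey
    _ ≤ 1 / (3 * ((k:ℝ) + 1)) + 1 / (3 * (k:ℝ) + 3) := add_le_add hstep hsum
    _ ≤ 1 / ((k:ℝ) + 1) := hfin
end

section
/- (From asymptotic regularity to T-asymptotic regularity) In the Tikhonov-Mann setting, assume: K ∈ ℕ satisfies K ≥ M; σ₅ : ℕ → ℕ is a rate of convergence of (β_n) towards 1; Λ ∈ ℕ, Λ ≥ 1, and N_Λ ∈ ℕ are such that λ_n ≥ 1/Λ for all n ≥ N_Λ; and Θ : ℕ → ℕ is a rate of asymptotic regularity for (x_n). Then Θ*(k) = max{N_Λ, Θ(2Λ(k+1)−1), σ₅(4KΛ(k+1)−1)} is a rate of T-asymptotic regularity for (x_n), i.e., d(x_n,Tx_n) ≤ 1/(k+1) for all k ∈ ℕ and all n ≥ Θ*(k). -/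
theorem tm_as_reg_to_T_as_reg
    {X : Type*} [MetricSpace X] (H : WHyp X) (C : Set X)
    (hCconv : ∀ x ∈ C, ∀ y ∈ C, ∀ l ∈ Set.Icc (0:ℝ) 1, H.W x y l ∈ C)
    (T : X → X) (hTmaps : ∀ x ∈ C, T x ∈ C)
    (hTne : ∀ x ∈ C, ∀ y ∈ C, dist (T x) (T y) ≤ dist x y)
    (p : X) (hpC : p ∈ C) (hpfix : T p = p)
    (u : X) (huC : u ∈ C)
    (lam beta : ℕ → ℝ)
    (hlam : ∀ n, lam n ∈ Set.Icc (0:ℝ) 1) (hbeta : ∀ n, beta n ∈ Set.Icc (0:ℝ) 1)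
    (x y : ℕ → X) (hx0 : x 0 ∈ C)
    (hy : ∀ n, y n = H.W u (x n) (beta n))
    (hx : ∀ n, x (n + 1) = H.W (y n) (T (y n)) (lam n))
    (M : ℝ) (hM : M = max (dist (x 0) p) (dist u p))
    (K : ℕ) (hK : M ≤ (K : ℝ))
    (σ₅ : ℕ → ℕ)
    (hσ₅ : ∀ k : ℕ, ∀ n ≥ σ₅ k, |beta n - 1| ≤ 1 / (k + 1))
    (Λ : ℕ) (hΛ : 1 ≤ Λ) (NΛ : ℕ)
    (hNΛ : ∀ n ≥ NΛ, 1 / (Λ : ℝ) ≤ lam n)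
    (Θ : ℕ → ℕ)
    (hΘ : ∀ k : ℕ, ∀ n ≥ Θ k, dist (x n) (x (n + 1)) ≤ 1 / (k + 1))
    (Θs : ℕ → ℕ)
    (hΘs : ∀ k : ℕ,
      Θs k = max NΛ (max (Θ (2 * Λ * (k + 1) - 1)) (σ₅ (4 * K * Λ * (k + 1) - 1)))) :
    ∀ k : ℕ, ∀ n ≥ Θs k, dist (x n) (T (x n)) ≤ 1 / (k + 1) := by
  intro k n hn
  rw [hΘs k] at hn
  have hn1 : NΛ ≤ n := le_trans (le_max_left _ _) hn
  have hn2 : Θ (2 * Λ * (k + 1) - 1) ≤ n :=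
    le_trans (le_trans (le_max_left _ _) (le_max_right _ _)) hn
  have hn3 : σ₅ (4 * K * Λ * (k + 1) - 1) ≤ n :=
    le_trans (le_trans (le_max_right _ _) (le_max_right _ _)) hn
  have hxC : ∀ m, x m ∈ C := by
    intro m
    induction m with
    | zero => exact hx0
    | succ m ih =>
      have hyC : y m ∈ C := by
        rw [hy]; exact hCconv u huC (x m) ih _ (hbeta m)
      rw [hx]; exact hCconv _ hyC _ (hTmaps _ hyC) _ (hlam m)
  have hyC : ∀ m, y m ∈ C := by
    intro m; rw [hy]; exact hCconv u huC (x m) (hxC m) _ (hbeta m)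
  have hup : dist u p ≤ (K : ℝ) := le_trans (by rw [hM]; exact le_max_right _ _) hK
  -- dist (x m) p ≤ K for all m
  have hxp : ∀ m, dist (x m) p ≤ (K : ℝ) := by
    intro m
    induction m with
    | zero => exact le_trans (by rw [hM]; exact le_max_left _ _) hK
    | succ m ih =>
      have hb := hbeta m
      have hl := hlam m
      have h1 : dist p (y m) ≤ (1 - beta m) * dist p u + beta m * dist p (x m) := by
        rw [hy]; exact H.W1 u (x m) p _ hb
      have hb1 := hb.1; have hb2 := hb.2
      have hyp : dist p (y m) ≤ (K : ℝ) := by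
        have hu' : dist p u ≤ (K : ℝ) := by rw [dist_comm]; exact hup
        have hx' : dist p (x m) ≤ (K : ℝ) := by rw [dist_comm]; exact ih
        nlinarith
      have h2 : dist p (x (m + 1)) ≤ (1 - lam m) * dist p (y m) + lam m * dist p (T (y m)) := by
        rw [hx]; exact H.W1 (y m) (T (y m)) p _ hl
      have h3 : dist p (T (y m)) ≤ dist p (y m) := by
        have := hTne p hpC (y m) (hyC m)
        rwa [hpfix] at this
      have hl1 := hl.1; have hl2 := hl.2
      rw [dist_comm]
      nlinarith [dist_nonneg (x := p) (y := y m)]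
  -- bound dist (x n) (y n)
  have hb := hbeta n
  have hxy : dist (x n) (y n) ≤ (1 - beta n) * (2 * K) := by
    have h1 : dist (x n) (y n) ≤ (1 - beta n) * dist (x n) u + beta n * dist (x n) (x n) := by
      rw [hy]; exact H.W1 u (x n) (x n) _ hb
    have h2 : dist (x n) u ≤ 2 * K := by
      calc dist (x n) u ≤ dist (x n) p + dist p u := dist_triangle _ _ _
      _ ≤ K + K := add_le_add (hxp n) (by rw [dist_comm]; exact hup)
      _ = 2 * K := by ring
    rw [dist_self] at h1
    have hb1 := hb.1
    have hb2 := hb.2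
    nlinarith [mul_le_mul_of_nonneg_left h2 (by linarith : (0:ℝ) ≤ 1 - beta n)]
  -- key inequality: lam n * dist (x n) (T (x n)) ≤ dist (x n) (x (n+1)) + dist (x n) (y n)
  have hl := hlam n
  have hkey : dist (x n) (T (x n)) ≤
      (Λ : ℝ) * (dist (x n) (x (n + 1)) + dist (x n) (y n)) := by
    set a := dist (x n) (T (x n)) with ha
    set b := dist (x n) (y n) with hbb
    set d := dist (x n) (x (n + 1)) with hd
    have h1 : dist (T (x n)) (x (n + 1)) ≤
        (1 - lam n) * dist (T (x n)) (y n) + lam n * dist (T (x n)) (T (y n)) := by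
      rw [hx]; exact H.W1 (y n) (T (y n)) (T (x n)) _ hl
    have h2 : dist (T (x n)) (T (y n)) ≤ dist (x n) (y n) :=
      hTne _ (hxC n) _ (hyC n)
    have h3 : dist (T (x n)) (y n) ≤ dist (x n) (y n) + a := by
      rw [dist_comm (T (x n)) (y n)]
      calc dist (y n) (T (x n)) ≤ dist (y n) (x n) + dist (x n) (T (x n)) :=
        dist_triangle _ _ _
      _ = dist (x n) (y n) + a := by rw [dist_comm]
    have h4 : a ≤ d + dist (x (n + 1)) (T (x n)) := by
      calc a ≤ dist (x n) (x (n + 1)) + dist (x (n + 1)) (T (x n)) := dist_triangle _ _ _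
      _ = d + dist (x (n + 1)) (T (x n)) := rfl
    rw [dist_comm (x (n + 1)) (T (x n))] at h4
    have hl1 := hl.1; have hl2 := hl.2
    have hla : lam n * a ≤ d + b := by nlinarith
    have hΛpos : (0 : ℝ) < Λ := by exact_mod_cast Nat.lt_of_lt_of_le Nat.zero_lt_one hΛ
    have hlΛ : 1 / (Λ : ℝ) ≤ lam n := hNΛ n hn1
    have ha0 : 0 ≤ a := dist_nonneg
    have : (1 / (Λ : ℝ)) * a ≤ d + b := le_trans (by nlinarith) hla
    calc a = (Λ : ℝ) * ((1 / Λ) * a) := by field_simp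
    _ ≤ (Λ : ℝ) * (d + b) := by
        apply mul_le_mul_of_nonneg_left this hΛpos.le
  -- numeric bounds
  have hΛpos : (0 : ℝ) < Λ := by exact_mod_cast Nat.lt_of_lt_of_le Nat.zero_lt_one hΛ
  have hkpos : (0 : ℝ) < (k : ℝ) + 1 := by positivity
  have hd1 : dist (x n) (x (n + 1)) ≤ 1 / (2 * Λ * (k + 1)) := by
    have h := hΘ _ n hn2
    have h1 : 1 ≤ 2 * Λ * (k + 1) :=
      Nat.one_le_iff_ne_zero.mpr (by positivity)
    have hm : ((2 * Λ * (k + 1) - 1 : ℕ) : ℝ) + 1 = 2 * Λ * (k + 1) := by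
      rw [Nat.cast_sub h1]; push_cast; ring
    rw [hm] at h
    exact h
  have hbnd : 1 - beta n ≤ 1 / (((4 * K * Λ * (k + 1) - 1 : ℕ) : ℝ) + 1) := by
    have h := hσ₅ _ n hn3
    have hb2 := hb.2
    rwa [abs_sub_comm, abs_of_nonneg (by linarith)] at h
  have hbK : (1 - beta n) * (2 * K) ≤ 1 / (2 * Λ * (k + 1)) := by
    rcases Nat.eq_zero_or_pos K with hK0 | hKpos
    · subst hK0
      push_cast
      rw [mul_zero, mul_zero]
      positivity
    · have h1 : 1 ≤ 4 * K * Λ * (k + 1) :=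
        Nat.one_le_iff_ne_zero.mpr (by positivity)
      have hm : ((4 * K * Λ * (k + 1) - 1 : ℕ) : ℝ) + 1 = 4 * K * Λ * (k + 1) := by
        rw [Nat.cast_sub h1]; push_cast; ring
      rw [hm] at hbnd
      have hKr : (0 : ℝ) < K := by exact_mod_cast hKpos
      calc (1 - beta n) * (2 * K) ≤ (1 / (4 * K * Λ * (k + 1))) * (2 * K) := by
            apply mul_le_mul_of_nonneg_right hbnd (by positivity)
      _ = 1 / (2 * Λ * (k + 1)) := by
            field_simp
            ring
  calc dist (x n) (T (x n)) ≤
      (Λ : ℝ) * (dist (x n) (x (n + 1)) + dist (x n) (y n)) := hkey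
  _ ≤ (Λ : ℝ) * (1 / (2 * Λ * (k + 1)) + 1 / (2 * Λ * (k + 1))) := by
      apply mul_le_mul_of_nonneg_left (add_le_add hd1 (hxy.trans hbK)) hΛpos.le
  _ = 1 / (k + 1) := by
      rw [← add_div, mul_comm, div_mul_eq_div_div_swap]
      have hΛne : (Λ:ℝ) ≠ 0 := hΛpos.ne'
      field_simp
      ring
end
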